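/- arXiv:2401.03924 — 10 statements merged into one kernel-verified Lean document; each statement's English description precedes it below -/
import Mathlib

section
/- Let p be a natural number and let a = (a_1, ..., a_{2p+2}) be a sequence of integers each lying in the interval [-p, p]. If at least p+1 entries of a are nonnegative and at least p+1 entries are nonpositive, then some nonempty subsequence of a sums to 0. -/
open Finset

lemma key_zero_sum (p : ℕ) (hp : 1 ≤ p) (x y : ℕ → ℤ)
    (hx : ∀ t, t < p + 1 → 1 ≤ x t ∧ x t ≤ (p : ℤ))
    (hy : ∀ t, t < p + 1 → 1 ≤ y t ∧ y t ≤ (p : ℤ))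
    (h : ∑ t ∈ Finset.range (p + 1), x t ≤ ∑ t ∈ Finset.range (p + 1), y t) :
    ∃ i k j l : ℕ, i < k ∧ k ≤ p + 1 ∧ j < l ∧ l ≤ p + 1 ∧
      ∑ t ∈ Finset.Ico i k, x t = ∑ t ∈ Finset.Ico j l, y t := by
  set X : ℕ → ℤ := fun n => ∑ t ∈ Finset.range n, x t with hX
  set Y : ℕ → ℤ := fun n => ∑ t ∈ Finset.range n, y t with hY
  have hXadd : ∀ i k : ℕ, i ≤ k → X k - X i = ∑ t ∈ Finset.Ico i k, x t := by
    intro i k hik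
    rw [hX]
    simp only
    rw [Finset.sum_Ico_eq_sub _ hik]
  have hYadd : ∀ i k : ℕ, i ≤ k → Y k - Y i = ∑ t ∈ Finset.Ico i k, y t := by
    intro i k hik
    rw [hY]
    simp only
    rw [Finset.sum_Ico_eq_sub _ hik]
  have hXmono : ∀ i k : ℕ, i < k → k ≤ p + 1 → X i < X k := by
    intro i k h1 h2
    have hpos : 0 < ∑ t ∈ Finset.Ico i k, x t := by
      apply Finset.sum_pos
      · intro t ht
        have ht' := Finset.mem_Ico.mp ht
        have := (hx t (by omega)).1
        omega
      · exact ⟨i, Finset.mem_Ico.mpr ⟨le_refl i, h1⟩⟩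
    have := hXadd i k h1.le
    omega
  have hYmonoLe : ∀ i k : ℕ, i ≤ k → k ≤ p + 1 → Y i ≤ Y k := by
    intro i k h1 h2
    have hpos : 0 ≤ ∑ t ∈ Finset.Ico i k, y t := by
      apply Finset.sum_nonneg
      intro t ht
      have ht' := Finset.mem_Ico.mp ht
      have := (hy t (by omega)).1
      omega
    have := hYadd i k h1
    omega
  have hY0 : Y 0 = 0 := by simp [hY]
  have hX0 : X 0 = 0 := by simp [hX]
  have hXnonneg : ∀ i : ℕ, i ≤ p + 1 → 0 ≤ X i := by
    intro i hi
    rcases Nat.eq_zero_or_pos i with h0 | h0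
    · simp [h0, hX0]
    · have := hXmono 0 i h0 hi; omega
  set J : ℕ → ℕ := fun i => Nat.findGreatest (fun j => Y j ≤ X i) (p + 1) with hJ
  have hJle : ∀ i, J i ≤ p + 1 := fun i => Nat.findGreatest_le _
  have hJspec : ∀ i : ℕ, i ≤ p + 1 → Y (J i) ≤ X i := by
    intro i hi
    show Y (Nat.findGreatest (fun j => Y j ≤ X i) (p + 1)) ≤ X i
    exact Nat.findGreatest_spec (P := fun j => Y j ≤ X i) (m := 0) (Nat.zero_le _) (by show Y 0 ≤ X i; rw [hY0]; exact hXnonneg i hi)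
  have hdlt : ∀ i : ℕ, i ≤ p + 1 → X i - Y (J i) ≤ (p : ℤ) - 1 := by
    intro i hi
    rcases eq_or_lt_of_le (hJle i) with hJe | hJl
    · -- J i = p+1
      have h1 : X i ≤ X (p + 1) := by
        rcases eq_or_lt_of_le hi with h2 | h2
        · rw [h2]
        · exact (hXmono i (p + 1) h2 le_rfl).le
      have h2 : X (p + 1) ≤ Y (p + 1) := h
      rw [hJe]
      have : (1 : ℤ) ≤ p := by exact_mod_cast hp
      omega
    · -- J i < p + 1, maximality
      have hnot : ¬ (Y (J i + 1) ≤ X i) := by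
        show ¬ (Y (Nat.findGreatest (fun j => Y j ≤ X i) (p + 1) + 1) ≤ X i)
        exact Nat.findGreatest_is_greatest (P := fun j => Y j ≤ X i) (Nat.lt_succ_self _) hJl
      push_neg at hnot
      have hstep : Y (J i + 1) - Y (J i) = y (J i) := by
        have := hYadd (J i) (J i + 1) (Nat.le_succ _)
        simpa using this
      have := (hy (J i) hJl).2
      omega
  have hmain : ∀ i k : ℕ, i < k → k ≤ p + 1 →
      X i - Y (J i) = X k - Y (J k) →
      ∃ i' k' j' l' : ℕ, i' < k' ∧ k' ≤ p + 1 ∧ j' < l' ∧ l' ≤ p + 1 ∧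
        ∑ t ∈ Finset.Ico i' k', x t = ∑ t ∈ Finset.Ico j' l', y t := by
    intro i k hik hk heq
    have hXik : X i < X k := hXmono i k hik hk
    have hYJ : Y (J i) < Y (J k) := by omega
    have hJik : J i < J k := by
      by_contra hcon
      push_neg at hcon
      have := hYmonoLe (J k) (J i) hcon (hJle i)
      omega
    refine ⟨i, k, J i, J k, hik, hk, hJik, hJle k, ?_⟩
    rw [← hXadd i k hik.le, ← hYadd (J i) (J k) hJik.le]
    omega
  -- pigeonhole
  have maps : ∀ i ∈ Finset.range (p + 2),
      (X i - Y (J i)).toNat ∈ Finset.range p := by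
    intro i hi
    have hi' : i ≤ p + 1 := by simpa using Nat.lt_succ_iff.mp (Finset.mem_range.mp hi)
    have h1 := hdlt i hi'
    have h2 : (1 : ℤ) ≤ p := by exact_mod_cast hp
    rw [Finset.mem_range]
    omega
  have hcard : (Finset.range p).card < (Finset.range (p + 2)).card := by
    simp
  obtain ⟨i, hi, k, hk, hne, heq⟩ :=
    Finset.exists_ne_map_eq_of_card_lt_of_maps_to hcard maps
  have hi' : i ≤ p + 1 := by have := Finset.mem_range.mp hi; omega
  have hk' : k ≤ p + 1 := by have := Finset.mem_range.mp hk; omega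
  have heqZ : X i - Y (J i) = X k - Y (J k) := by
    have n1 : 0 ≤ X i - Y (J i) := by have := hJspec i hi'; omega
    have n2 : 0 ≤ X k - Y (J k) := by have := hJspec k hk'; omega
    omega
  rcases hne.lt_or_gt with hlt | hlt
  · exact hmain i k hlt hk' heqZ
  · exact hmain k i hlt hi' heqZ.symm

/-- zero-sum subsequence lemma. -/
theorem stmt_0 (p : ℕ) (a : Fin (2 * p + 2) → ℤ)
    (hrange : ∀ i, -(p : ℤ) ≤ a i ∧ a i ≤ (p : ℤ))
    (hnonneg : (p : ℕ) + 1 ≤ (Finset.univ.filter (fun i => 0 ≤ a i)).card)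
    (hnonpos : (p : ℕ) + 1 ≤ (Finset.univ.filter (fun i => a i ≤ 0)).card) :
    ∃ s : Finset (Fin (2 * p + 2)), s.Nonempty ∧ ∑ i ∈ s, a i = 0 := by
  by_cases hz : ∃ i, a i = 0
  · obtain ⟨i, hi⟩ := hz
    exact ⟨{i}, Finset.singleton_nonempty i, by simp [hi]⟩
  push_neg at hz
  have hp : 1 ≤ p := by
    by_contra hcon
    have h1 := hrange ⟨0, by omega⟩
    have h2 := hz ⟨0, by omega⟩
    omega
  -- positive and negative index sets
  have hPosCard : p + 1 ≤ (Finset.univ.filter (fun i => 0 < a i)).card := by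
    have : (Finset.univ.filter (fun i => (0:ℤ) ≤ a i) : Finset (Fin (2*p+2)))
        = Finset.univ.filter (fun i => 0 < a i) := by
      apply Finset.filter_congr
      intro i _
      have := hz i
      constructor
      · intro h'; omega
      · intro h'; omega
    rw [this] at hnonneg; exact hnonneg
  have hNegCard : p + 1 ≤ (Finset.univ.filter (fun i => a i < 0)).card := by
    have : (Finset.univ.filter (fun i => a i ≤ (0:ℤ)) : Finset (Fin (2*p+2)))
        = Finset.univ.filter (fun i => a i < 0) := by
      apply Finset.filter_congr
      intro i _
      have := hz i
      constructor
      · intro h'; omega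
      · intro h'; omega
    rw [this] at hnonpos; exact hnonpos
  obtain ⟨P, hPsub, hPcard⟩ := Finset.exists_subset_card_eq hPosCard
  obtain ⟨N, hNsub, hNcard⟩ := Finset.exists_subset_card_eq hNegCard
  have hPpos : ∀ i ∈ P, 0 < a i := by
    intro i hi
    have := hPsub hi
    simpa using (Finset.mem_filter.mp this).2
  have hNneg : ∀ i ∈ N, a i < 0 := by
    intro i hi
    have := hNsub hi
    simpa using (Finset.mem_filter.mp this).2
  set e : Fin (p+1) → Fin (2*p+2) := fun t => (P.orderIsoOfFin hPcard t : Fin (2*p+2)) with he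
  set f : Fin (p+1) → Fin (2*p+2) := fun t => (N.orderIsoOfFin hNcard t : Fin (2*p+2)) with hf
  have heInj : Function.Injective e := by
    intro s t hst
    have := Subtype.ext hst
    exact (P.orderIsoOfFin hPcard).injective this
  have hfInj : Function.Injective f := by
    intro s t hst
    have := Subtype.ext hst
    exact (N.orderIsoOfFin hNcard).injective this
  have heMem : ∀ t, e t ∈ P := fun t => (P.orderIsoOfFin hPcard t).2
  have hfMem : ∀ t, f t ∈ N := fun t => (N.orderIsoOfFin hNcard t).2
  set E : ℕ → Fin (2*p+2) := fun t => if h : t < p + 1 then e ⟨t, h⟩ else ⟨0, by omega⟩ with hE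
  set F : ℕ → Fin (2*p+2) := fun t => if h : t < p + 1 then f ⟨t, h⟩ else ⟨0, by omega⟩ with hF
  set x : ℕ → ℤ := fun t => a (E t) with hx
  set y : ℕ → ℤ := fun t => -(a (F t)) with hy
  have hxb : ∀ t, t < p + 1 → 1 ≤ x t ∧ x t ≤ (p : ℤ) := by
    intro t ht
    have hEt : E t = e ⟨t, ht⟩ := by rw [hE]; simp [ht]
    have h1 := hPpos _ (heMem ⟨t, ht⟩)
    have h2 := (hrange (e ⟨t, ht⟩)).2
    have hxt : x t = a (e ⟨t, ht⟩) := by rw [hx]; simp only; rw [hEt]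
    rw [hxt]
    omega
  have hyb : ∀ t, t < p + 1 → 1 ≤ y t ∧ y t ≤ (p : ℤ) := by
    intro t ht
    have hFt : F t = f ⟨t, ht⟩ := by rw [hF]; simp [ht]
    have h1 := hNneg _ (hfMem ⟨t, ht⟩)
    have h2 := (hrange (f ⟨t, ht⟩)).1
    have hyt : y t = -(a (f ⟨t, ht⟩)) := by rw [hy]; simp only; rw [hFt]
    rw [hyt]
    omega
  have hkey : ∃ i k j l : ℕ, i < k ∧ k ≤ p + 1 ∧ j < l ∧ l ≤ p + 1 ∧
      ∑ t ∈ Finset.Ico i k, x t = ∑ t ∈ Finset.Ico j l, y t := by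
    rcases le_total (∑ t ∈ Finset.range (p+1), x t) (∑ t ∈ Finset.range (p+1), y t) with hle | hle
    · exact key_zero_sum p hp x y hxb hyb hle
    · obtain ⟨i, k, j, l, h1, h2, h3, h4, h5⟩ := key_zero_sum p hp y x hyb hxb hle
      exact ⟨j, l, i, k, h3, h4, h1, h2, h5.symm⟩
  obtain ⟨i, k, j, l, hik, hk, hjl, hl, hsum⟩ := hkey
  set s₁ : Finset (Fin (2*p+2)) := (Finset.Ico i k).image E with hs₁
  set s₂ : Finset (Fin (2*p+2)) := (Finset.Ico j l).image F with hs₂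
  have hEinjOn : Set.InjOn E (Finset.Ico i k) := by
    intro s hs t ht hst
    have hs' : s < p + 1 := by have := Finset.mem_Ico.mp (Finset.mem_coe.mp hs); omega
    have ht' : t < p + 1 := by have := Finset.mem_Ico.mp (Finset.mem_coe.mp ht); omega
    have h1 : E s = e ⟨s, hs'⟩ := by rw [hE]; simp [hs']
    have h2 : E t = e ⟨t, ht'⟩ := by rw [hE]; simp [ht']
    rw [h1, h2] at hst
    have := heInj hst
    exact Fin.mk.inj_iff.mp this
  have hFinjOn : Set.InjOn F (Finset.Ico j l) := by
    intro s hs t ht hst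
    have hs' : s < p + 1 := by have := Finset.mem_Ico.mp (Finset.mem_coe.mp hs); omega
    have ht' : t < p + 1 := by have := Finset.mem_Ico.mp (Finset.mem_coe.mp ht); omega
    have h1 : F s = f ⟨s, hs'⟩ := by rw [hF]; simp [hs']
    have h2 : F t = f ⟨t, ht'⟩ := by rw [hF]; simp [ht']
    rw [h1, h2] at hst
    have := hfInj hst
    exact Fin.mk.inj_iff.mp this
  have hs₁sum : ∑ m ∈ s₁, a m = ∑ t ∈ Finset.Ico i k, x t := by
    rw [hs₁, Finset.sum_image (fun s hs t ht hst => hEinjOn hs ht hst)]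
  have hs₂sum : ∑ m ∈ s₂, a m = -∑ t ∈ Finset.Ico j l, y t := by
    rw [hs₂, Finset.sum_image (fun s hs t ht hst => hFinjOn hs ht hst)]
    rw [hy]
    simp
  have hs₁pos : ∀ m ∈ s₁, 0 < a m := by
    intro m hm
    obtain ⟨t, ht, rfl⟩ := Finset.mem_image.mp hm
    have ht' : t < p + 1 := by have := Finset.mem_Ico.mp ht; omega
    have hEt : E t = e ⟨t, ht'⟩ := by rw [hE]; simp [ht']
    rw [hEt]
    exact hPpos _ (heMem _)
  have hs₂neg : ∀ m ∈ s₂, a m < 0 := by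
    intro m hm
    obtain ⟨t, ht, rfl⟩ := Finset.mem_image.mp hm
    have ht' : t < p + 1 := by have := Finset.mem_Ico.mp ht; omega
    have hFt : F t = f ⟨t, ht'⟩ := by rw [hF]; simp [ht']
    rw [hFt]
    exact hNneg _ (hfMem _)
  have hdisj : Disjoint s₁ s₂ := by
    rw [Finset.disjoint_left]
    intro m hm1 hm2
    have := hs₁pos m hm1
    have := hs₂neg m hm2
    omega
  refine ⟨s₁ ∪ s₂, ?_, ?_⟩
  · apply Finset.Nonempty.mono Finset.subset_union_left
    exact (Finset.Nonempty.image ⟨i, Finset.mem_Ico.mpr ⟨le_refl i, hik⟩⟩ E)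
  · rw [Finset.sum_union hdisj, hs₁sum, hs₂sum, hsum]
    ring
end

section
/- Every complete r-partite graph has the path-shortening property Pshort(3): for every perfect matching M and every M-alternating path P, if {a_1,b_1}, {a_2,b_2}, {a_3,b_3} are three matching edges of P whose endpoints appear in the order a_1,b_1,a_2,b_2,a_3,b_3 along P, then G contains an edge {a_i, b_j} for some 1 ≤ i < j ≤ 3, or G contains both edges {a_{i1}, a_{i3}} and {b_{i2}, b_{i4}} for some 1 ≤ i1 < i2 < i3 < i4 ≤ 3 (the latter case being vacuous for t = 3). -/
variable {V : Type*} [Fintype V] [DecidableEq V]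

/-- `M` is a perfect matching of `G`: every edge of `M` is an edge of `G`,
and every vertex lies in exactly one edge of `M`. -/
def IsPM (G : SimpleGraph V) (M : Finset (Sym2 V)) : Prop :=
  (∀ e ∈ M, e ∈ G.edgeSet) ∧ ∀ v : V, ∃! e, e ∈ M ∧ v ∈ e

/-- The `M`-induced weight of an edge, for the coloring `c` (`true` = red):
`-1` for red matching edges, `+1` for red non-matching edges, `0` for blue edges. -/
def wt (c : Sym2 V → Bool) (M : Finset (Sym2 V)) (e : Sym2 V) : ℤ :=
  if c e then (if e ∈ M then -1 else 1) else 0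

/-- Number of red edges of a finite edge set. -/
def redCount (c : Sym2 V → Bool) (F : Finset (Sym2 V)) : ℕ :=
  (F.filter (fun e => c e = true)).card

/-- A walk is `M`-alternating if consecutive edges have opposite membership in `M`. -/
def IsAlt (M : Finset (Sym2 V)) {G : SimpleGraph V} {u v : V} (P : G.Walk u v) : Prop :=
  P.edges.Chain' (fun e f => (e ∈ M) ↔ f ∉ M)

/-- The path-shortening property `Pshort(t)`: for every perfect matching `M`, every
`M`-alternating path `P`, and every family of `t` matching edges `{a i, b i}` of `P`
whose endpoints appear along `P` in the order `a 1, b 1, …, a t, b t`, either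
`G` has an edge `{a i, b j}` with `i < j`, or `G` has both edges `{a i1, a i3}` and
`{b i2, b i4}` for some `i1 < i2 < i3 < i4`. -/
def Pshort (G : SimpleGraph V) (t : ℕ) : Prop :=
  ∀ (M : Finset (Sym2 V)), IsPM G M →
    ∀ (u v : V) (P : G.Walk u v), P.IsPath → IsAlt M P →
      ∀ a b : Fin t → V,
        (∀ i, s(a i, b i) ∈ M ∧ s(a i, b i) ∈ P.edges) →
        List.Sublist ((List.finRange t).flatMap (fun i => [a i, b i])) P.support →
        (∃ i j, i < j ∧ G.Adj (a i) (b j)) ∨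
        (∃ i1 i2 i3 i4 : Fin t, i1 < i2 ∧ i2 < i3 ∧ i3 < i4 ∧
          G.Adj (a i1) (a i3) ∧ G.Adj (b i2) (b i4))

/-- every complete `r`-partite graph has the path-shortening
property `Pshort(3)`. -/
theorem stmt_3 (G : SimpleGraph V) (r : ℕ) (part : V → Fin r)
    (hpart : ∀ u w : V, G.Adj u w ↔ part u ≠ part w) :
    Pshort G 3 := by
  intro M hM u v P hP halt a b hab hsub
  by_contra hcon
  push_neg at hcon
  obtain ⟨h1, -⟩ := hcon
  have e01 := h1 0 1 (by decide)
  have e02 := h1 0 2 (by decide)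
  have e12 := h1 1 2 (by decide)
  rw [hpart] at e01 e02 e12
  push_neg at e01 e02 e12
  have h2 : G.Adj (a 1) (b 1) := (SimpleGraph.mem_edgeSet G).mp (hM.1 _ (hab 1).1)
  rw [hpart] at h2
  exact h2 (e12.trans (e02.symm.trans e01))
end

section
/- Every graph of neighborhood diversity at most d has the path-shortening property Pshort(d+1): given a perfect matching M, an M-alternating path P, and d+1 matching edges {a_1,b_1},...,{a_{d+1},b_{d+1}} of P whose vertices appear in this order along P, there exist indices i < j such that {a_i, b_j} is an edge of G. -/
variable {V : Type*} [Fintype V] [DecidableEq V]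

/-- a graph of neighborhood diversity at most `d` has `Pshort(d+1)`,
in the strong form: among any `d+1` ordered matching edges of an alternating path
there are indices `i < j` with `{a i, b j}` an edge. -/
theorem stmt_4 (G : SimpleGraph V) (d : ℕ) (part : V → Fin d)
    (hpart : ∀ u w : V, part u = part w → G.neighborSet u \ {w} = G.neighborSet w \ {u})
    (M : Finset (Sym2 V)) (hM : IsPM G M)
    (u v : V) (P : G.Walk u v) (hP : P.IsPath) (halt : IsAlt M P)
    (a b : Fin (d + 1) → V)
    (hmatch : ∀ i, s(a i, b i) ∈ M ∧ s(a i, b i) ∈ P.edges)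
    (horder : List.Sublist ((List.finRange (d + 1)).flatMap (fun i => [a i, b i])) P.support) :
    ∃ i j : Fin (d + 1), i < j ∧ G.Adj (a i) (b j) := by
  -- The flatMap list has no duplicates, being a sublist of the path's support.
  have hnd : (((List.finRange (d + 1)).flatMap (fun i => [a i, b i]))).Nodup :=
    hP.support_nodup.sublist horder
  have hne : ∀ i j : Fin (d + 1), i < j → a i ≠ b j := by
    intro i j hij
    rw [List.nodup_flatMap, List.pairwise_iff_getElem] at hnd
    have hd := hnd.2 i j (by simp; have := i.isLt; omega) (by simp; have := j.isLt; omega) (by simpa using hij)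
    simp only [List.getElem_finRange, Fin.cast_mk, Function.onFun, Fin.eta] at hd
    have := hd (a := a i) (by simp)
    simp at this
    exact this.2
  -- Pigeonhole: two of the `b i` have the same part.
  obtain ⟨i, j, hij, hpb⟩ : ∃ i j : Fin (d + 1), i ≠ j ∧ part (b i) = part (b j) := by
    have := Fintype.exists_ne_map_eq_of_card_lt (fun i : Fin (d + 1) => part (b i))
      (by simp)
    obtain ⟨i, j, h1, h2⟩ := this
    exact ⟨i, j, h1, h2⟩
  -- WLOG i < j.
  rcases lt_or_gt_of_ne hij with h | h
  · refine ⟨i, j, h, ?_⟩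
    have hadj : G.Adj (a i) (b i) := by
      have := hM.1 _ (hmatch i).1
      rwa [SimpleGraph.mem_edgeSet] at this
    have hmem : a i ∈ G.neighborSet (b i) \ {b j} :=
      ⟨hadj.symm, by simpa using hne i j h⟩
    rw [hpart _ _ hpb] at hmem
    exact hmem.1.symm
  · refine ⟨j, i, h, ?_⟩
    have hadj : G.Adj (a j) (b j) := by
      have := hM.1 _ (hmatch j).1
      rwa [SimpleGraph.mem_edgeSet] at this
    have hmem : a j ∈ G.neighborSet (b j) \ {b i} :=
      ⟨hadj.symm, by simpa using hne j i h⟩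
    rw [hpart _ _ hpb.symm] at hmem
    exact hmem.1.symm
end

section
/- Every bipartite graph with bipartite independence number at most β has the path-shortening property Pshort(2β+2): for every perfect matching M, every M-alternating path P, and every choice of 2β+2 matching edges {a_1,b_1},...,{a_{2β+2},b_{2β+2}} of P whose vertices appear in this order along P, there exist indices i < j with {a_i, b_j} an edge of G. -/
variable {V : Type*} [Fintype V] [DecidableEq V]

private lemma walk_support_getElem {G : SimpleGraph V} {u v : V} (p : G.Walk u v) :
    ∀ (k : ℕ) (h : k < p.support.length), p.support[k] = p.getVert k := by
  induction p with
  | nil =>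
    intro k h
    simp only [SimpleGraph.Walk.support_nil, List.length_cons, List.length_nil] at h
    have hk0 : k = 0 := by omega
    subst hk0
    simp
  | cons hadj q ih =>
    intro k h
    cases k with
    | zero => simp
    | succ k =>
      simp only [SimpleGraph.Walk.support_cons, List.getElem_cons_succ,
        SimpleGraph.Walk.getVert_cons_succ]
      exact ih k (by simpa [SimpleGraph.Walk.length_support] using
        (by simpa [SimpleGraph.Walk.length_support] using h : k + 1 < q.length + 2))

private lemma walk_edges_getElem {G : SimpleGraph V} {u v : V} (p : G.Walk u v) :
    ∀ (k : ℕ) (h : k < p.edges.length), p.edges[k] = s(p.getVert k, p.getVert (k+1)) := by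
  induction p with
  | nil => intro k h; simp at h
  | cons hadj q ih =>
    intro k h
    cases k with
    | zero => simp [SimpleGraph.Walk.getVert_cons_succ]
    | succ k =>
      simp only [SimpleGraph.Walk.edges_cons, List.getElem_cons_succ,
        SimpleGraph.Walk.getVert_cons_succ]
      exact ih k (by simpa using h)

private lemma flatMap_pair_length {α γ : Type*} (g h : γ → α) (l : List γ) :
    (l.flatMap (fun i => [g i, h i])).length = 2 * l.length := by
  induction l with
  | nil => simp
  | cons x l ih => simp [ih]; omega

private lemma flatMap_pair_getElem {α γ : Type*} (g h : γ → α) :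
    ∀ (l : List γ) (k : ℕ) (hk : k < l.length),
      ((l.flatMap (fun i => [g i, h i]))[2*k]'(by rw [flatMap_pair_length]; omega) = g l[k] ∧
       (l.flatMap (fun i => [g i, h i]))[2*k+1]'(by rw [flatMap_pair_length]; omega) = h l[k]) := by
  intro l
  induction l with
  | nil => intro k hk; simp at hk
  | cons x l ih =>
    intro k hk
    cases k with
    | zero => simp
    | succ k =>
      have h2 : 2 * (k+1) = (2*k)+1+1 := by ring
      have h3 : 2 * (k+1)+1 = (2*k+1)+1+1 := by ring
      simp only [List.flatMap_cons, List.cons_append, List.nil_append, h2, h3,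
        List.getElem_cons_succ]
      exact ih k (by simpa using hk)

private lemma chain_alt_parity {α : Type*} (p : α → Prop) (l : List α)
    (hc : l.Chain' (fun e f => p e ↔ ¬ p f)) :
    ∀ (k : ℕ) (h : k < l.length) (h0 : 0 < l.length),
      (p (l[k]) ↔ (p (l[0]'h0) ↔ k % 2 = 0)) := by
  intro k
  induction k with
  | zero => intro h h0; simp
  | succ k ih =>
    intro h h0
    have hk : k < l.length := by omega
    have hstep := List.isChain_iff_getElem.mp hc k (by omega)
    have := ih hk h0
    have hpar : ((k+1) % 2 = 0) ↔ ¬ (k % 2 = 0) := by omega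
    tauto

private lemma side_parity {G : SimpleGraph V} (side : V → Bool)
    (hbip : ∀ u w : V, G.Adj u w → side u ≠ side w) {u v : V} (p : G.Walk u v) :
    ∀ (k : ℕ), k ≤ p.length → (side (p.getVert k) = side u ↔ k % 2 = 0) := by
  intro k
  induction k with
  | zero => intro _; simp
  | succ k ih =>
    intro h
    have hk := ih (by omega)
    have hadj := hbip _ _ (p.adj_getVert_succ (by omega : k < p.length))
    have hpar : ((k+1) % 2 = 0) ↔ ¬ (k % 2 = 0) := by omega
    rcases Bool.eq_false_or_eq_true (side (p.getVert (k+1))) with h1 | h1 <;>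
      rcases Bool.eq_false_or_eq_true (side (p.getVert k)) with h2 | h2 <;>
      rcases Bool.eq_false_or_eq_true (side u) with h3 | h3 <;>
      simp_all

private lemma bool_eq_of_iff {x y c : Bool} (h : (x = c) ↔ (y = c)) : x = y := by
  cases x <;> cases y <;> cases c <;> simp_all

set_option maxHeartbeats 1000000 in
/-- a bipartite graph with bipartite independence number at most `β`
has `Pshort(2β+2)`, in the strong form with the first disjunct only. -/
theorem stmt_5 (G : SimpleGraph V) (β : ℕ) (side : V → Bool)
    (hbip : ∀ u w : V, G.Adj u w → side u ≠ side w)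
    (hind : ¬ ∃ A' B' : Finset V, (∀ x ∈ A', side x = true) ∧ (∀ y ∈ B', side y = false) ∧
      A'.card = β + 1 ∧ B'.card = β + 1 ∧ ∀ x ∈ A', ∀ y ∈ B', ¬ G.Adj x y)
    (M : Finset (Sym2 V)) (hM : IsPM G M)
    (u v : V) (P : G.Walk u v) (hP : P.IsPath) (halt : IsAlt M P)
    (a b : Fin (2 * β + 2) → V)
    (hmatch : ∀ i, s(a i, b i) ∈ M ∧ s(a i, b i) ∈ P.edges)
    (horder : List.Sublist ((List.finRange (2 * β + 2)).flatMap (fun i => [a i, b i])) P.support) :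
    ∃ i j : Fin (2 * β + 2), i < j ∧ G.Adj (a i) (b j) := by
  classical
  obtain ⟨f, hf⟩ := List.sublist_iff_exists_fin_orderEmbedding_get_eq.mp horder
  have hLlen : ((List.finRange (2*β+2)).flatMap (fun i => [a i, b i])).length = 2 * (2*β+2) := by
    rw [flatMap_pair_length]; simp
  have hslen : P.support.length = P.length + 1 := P.length_support
  have hedlen : P.edges.length = P.length := P.length_edges
  have h2i : ∀ i : Fin (2*β+2),
      (2 * (i:ℕ)) < ((List.finRange (2*β+2)).flatMap fun i => [a i, b i]).length := by
    intro i; rw [hLlen]; omega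
  have h2i1 : ∀ i : Fin (2*β+2),
      (2 * (i:ℕ) + 1) < ((List.finRange (2*β+2)).flatMap fun i => [a i, b i]).length := by
    intro i; rw [hLlen]; omega
  set pA : Fin (2*β+2) → ℕ := fun i => (f ⟨2*(i:ℕ), h2i i⟩ : ℕ) with hpA_def
  set pB : Fin (2*β+2) → ℕ := fun i => (f ⟨2*(i:ℕ)+1, h2i1 i⟩ : ℕ) with hpB_def
  have hfin : ∀ (i : Fin (2*β+2)) (h : (i:ℕ) < (List.finRange (2*β+2)).length),
      (List.finRange (2*β+2))[(i:ℕ)] = i := by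
    intro i h; simp
  have haA : ∀ i : Fin (2*β+2), P.getVert (pA i) = a i := by
    intro i
    have h1 := hf ⟨2*(i:ℕ), h2i i⟩
    simp only [List.get_eq_getElem] at h1
    rw [walk_support_getElem] at h1
    rw [← h1, (flatMap_pair_getElem a b (List.finRange (2*β+2)) i (by simp)).1,
      hfin i (by simp)]
  have hbB : ∀ i : Fin (2*β+2), P.getVert (pB i) = b i := by
    intro i
    have h1 := hf ⟨2*(i:ℕ)+1, h2i1 i⟩
    simp only [List.get_eq_getElem] at h1
    rw [walk_support_getElem] at h1
    rw [← h1, (flatMap_pair_getElem a b (List.finRange (2*β+2)) i (by simp)).2,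
      hfin i (by simp)]
  have hpA_le : ∀ i, pA i ≤ P.length := by
    intro i
    have h1 : pA i < P.support.length := (f ⟨2*(i:ℕ), h2i i⟩).isLt
    omega
  have hpB_le : ∀ i, pB i ≤ P.length := by
    intro i
    have h1 : pB i < P.support.length := (f ⟨2*(i:ℕ)+1, h2i1 i⟩).isLt
    omega
  have hAB : ∀ i, pA i < pB i := by
    intro i
    exact f.strictMono (by simp [Fin.lt_def])
  have hnd : P.support.Nodup := hP.support_nodup
  have hinj : ∀ m m', m ≤ P.length → m' ≤ P.length → P.getVert m = P.getVert m' → m = m' := by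
    intro m m' hm hm' he
    have h1 : P.support[m]'(by omega) = P.support[m']'(by omega) := by
      rw [walk_support_getElem, walk_support_getElem]; exact he
    exact (hnd.getElem_inj_iff).mp h1
  have hkey : ∀ i : Fin (2*β+2), pB i = pA i + 1 := by
    intro i
    obtain ⟨k, hk, hek⟩ := List.getElem_of_mem (hmatch i).2
    rw [walk_edges_getElem] at hek
    have hklen : k < P.length := by omega
    rw [Sym2.eq_iff] at hek
    rcases hek with ⟨h1, h2⟩ | ⟨h1, h2⟩
    · have e1 : k = pA i := hinj _ _ (by omega) (hpA_le i) (h1.trans (haA i).symm)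
      have e2 : k + 1 = pB i := hinj _ _ (by omega) (hpB_le i) (h2.trans (hbB i).symm)
      omega
    · have e1 : k = pB i := hinj _ _ (by omega) (hpB_le i) (h1.trans (hbB i).symm)
      have e2 : k + 1 = pA i := hinj _ _ (by omega) (hpA_le i) (h2.trans (haA i).symm)
      have := hAB i
      omega
  have hpA_lt : ∀ i, pA i < P.length := by
    intro i; have := hkey i; have := hpB_le i; omega
  have hmemA : ∀ i : Fin (2*β+2), P.edges[pA i]'(by rw [hedlen]; exact hpA_lt i) ∈ M := by
    intro i
    rw [walk_edges_getElem]
    have : pA i + 1 = pB i := (hkey i).symm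
    rw [this, haA i, hbB i]
    exact (hmatch i).1
  have hpar : ∀ i j : Fin (2*β+2), pA i % 2 = pA j % 2 := by
    intro i j
    have h0 : 0 < P.edges.length := by rw [hedlen]; have := hpA_lt i; omega
    have hi := (chain_alt_parity (· ∈ M) P.edges halt (pA i)
      (by rw [hedlen]; exact hpA_lt i) h0).mp (hmemA i)
    have hj := (chain_alt_parity (· ∈ M) P.edges halt (pA j)
      (by rw [hedlen]; exact hpA_lt j) h0).mp (hmemA j)
    by_cases hm0 : P.edges[0]'h0 ∈ M
    · have e1 := hi.mp hm0
      have e2 := hj.mp hm0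
      omega
    · have e1 : ¬ (pA i % 2 = 0) := fun h => hm0 (hi.mpr h)
      have e2 : ¬ (pA j % 2 = 0) := fun h => hm0 (hj.mpr h)
      omega
  have hsideA : ∀ i j : Fin (2*β+2), side (a i) = side (a j) := by
    intro i j
    have hi := side_parity side hbip P (pA i) (hpA_le i)
    have hj := side_parity side hbip P (pA j) (hpA_le j)
    rw [haA i] at hi
    rw [haA j] at hj
    have hpq : (pA i % 2 = 0) ↔ (pA j % 2 = 0) := by have := hpar i j; omega
    have hij : side (a i) = side u ↔ side (a j) = side u := hi.trans (hpq.trans hj.symm)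
    exact bool_eq_of_iff hij
  have hadj : ∀ i : Fin (2*β+2), G.Adj (a i) (b i) := by
    intro i
    exact (SimpleGraph.mem_edgeSet G).mp (hM.1 _ (hmatch i).1)
  have hsideB : ∀ i : Fin (2*β+2), side (b i) ≠ side (a i) := by
    intro i
    exact fun h => hbip _ _ (hadj i) h.symm
  have hainj : Function.Injective a := by
    intro i j hij
    have h1 : pA i = pA j :=
      hinj _ _ (hpA_le i) (hpA_le j) (by rw [haA i, haA j, hij])
    have h2 : (⟨2*(i:ℕ), h2i i⟩ : Fin _) = ⟨2*(j:ℕ), h2i j⟩ := f.injective (Fin.ext h1)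
    have h3 : 2*(i:ℕ) = 2*(j:ℕ) := congrArg Fin.val h2
    exact Fin.ext (by omega)
  have hbinj : Function.Injective b := by
    intro i j hij
    have h1 : pB i = pB j :=
      hinj _ _ (hpB_le i) (hpB_le j) (by rw [hbB i, hbB j, hij])
    have h2 : (⟨2*(i:ℕ)+1, h2i1 i⟩ : Fin _) = ⟨2*(j:ℕ)+1, h2i1 j⟩ := f.injective (Fin.ext h1)
    have h3 : 2*(i:ℕ)+1 = 2*(j:ℕ)+1 := congrArg Fin.val h2
    exact Fin.ext (by omega)
  by_contra hcon
  push_neg at hcon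
  set i0 : Fin (2*β+2) := ⟨0, by omega⟩ with hi0
  have hga : ∀ (t : ℕ), t < β + 1 → t < 2*β+2 := by omega
  have hgb : ∀ (t : ℕ), t < β + 1 → β+1+t < 2*β+2 := by omega
  have hAinj : Function.Injective (fun t : Fin (β+1) => a ⟨(t:ℕ), hga t t.isLt⟩) := by
    intro s t h
    have := hainj h
    have := congrArg Fin.val this
    exact Fin.ext (by simpa using this)
  have hBinj : Function.Injective (fun t : Fin (β+1) => b ⟨β+1+(t:ℕ), hgb t t.isLt⟩) := by
    intro s t h
    have := hbinj h
    have := congrArg Fin.val this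
    simp only at this
    exact Fin.ext (by omega)
  cases hs : side (a i0) with
  | true =>
    apply hind
    refine ⟨Finset.image (fun t : Fin (β+1) => a ⟨(t:ℕ), hga t t.isLt⟩) Finset.univ,
      Finset.image (fun t : Fin (β+1) => b ⟨β+1+(t:ℕ), hgb t t.isLt⟩) Finset.univ,
      ?_, ?_, ?_, ?_, ?_⟩
    · intro x hx
      simp only [Finset.mem_image, Finset.mem_univ, true_and] at hx
      obtain ⟨t, rfl⟩ := hx
      rw [hsideA _ i0, hs]
    · intro y hy
      simp only [Finset.mem_image, Finset.mem_univ, true_and] at hy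
      obtain ⟨t, rfl⟩ := hy
      have h1 := hsideB ⟨β+1+(t:ℕ), hgb t t.isLt⟩
      rw [hsideA _ i0, hs] at h1
      simpa using h1
    · rw [Finset.card_image_of_injective _ hAinj, Finset.card_univ, Fintype.card_fin]
    · rw [Finset.card_image_of_injective _ hBinj, Finset.card_univ, Fintype.card_fin]
    · intro x hx y hy
      simp only [Finset.mem_image, Finset.mem_univ, true_and] at hx hy
      obtain ⟨t, rfl⟩ := hx
      obtain ⟨s, rfl⟩ := hy
      exact hcon ⟨(t:ℕ), hga t t.isLt⟩ ⟨β+1+(s:ℕ), hgb s s.isLt⟩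
        (by simp [Fin.lt_def]; omega)
  | false =>
    apply hind
    refine ⟨Finset.image (fun t : Fin (β+1) => b ⟨β+1+(t:ℕ), hgb t t.isLt⟩) Finset.univ,
      Finset.image (fun t : Fin (β+1) => a ⟨(t:ℕ), hga t t.isLt⟩) Finset.univ,
      ?_, ?_, ?_, ?_, ?_⟩
    · intro x hx
      simp only [Finset.mem_image, Finset.mem_univ, true_and] at hx
      obtain ⟨t, rfl⟩ := hx
      have h1 := hsideB ⟨β+1+(t:ℕ), hgb t t.isLt⟩
      rw [hsideA _ i0, hs] at h1
      simpa using h1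
    · intro y hy
      simp only [Finset.mem_image, Finset.mem_univ, true_and] at hy
      obtain ⟨t, rfl⟩ := hy
      rw [hsideA _ i0, hs]
    · rw [Finset.card_image_of_injective _ hBinj, Finset.card_univ, Fintype.card_fin]
    · rw [Finset.card_image_of_injective _ hAinj, Finset.card_univ, Fintype.card_fin]
    · intro x hx y hy
      simp only [Finset.mem_image, Finset.mem_univ, true_and] at hx hy
      obtain ⟨t, rfl⟩ := hx
      obtain ⟨s, rfl⟩ := hy
      intro hxy
      exact hcon ⟨(s:ℕ), hga s s.isLt⟩ ⟨β+1+(t:ℕ), hgb t t.isLt⟩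
        (by simp [Fin.lt_def]; omega) hxy.symm
end

section
/- Let (G,c) be a red-blue edge-colored graph with perfect matching M, and let P be an M-alternating path with weight w_M(P) ≤ -2t for an integer t ≥ 2. Then P contains a subpath P' with an even number of edges such that w_M(P') ≤ 0 and P' has at least t red edges (i.e., P contains a t-good path). -/
variable {V : Type*} [Fintype V] [DecidableEq V]

lemma wt_bounds (c : Sym2 V → Bool) (M : Finset (Sym2 V)) (e : Sym2 V) :
    -1 ≤ wt c M e ∧ wt c M e ≤ 1 := by
  unfold wt; split <;> [split <;> omega; omega]

lemma neg_sum_le_red (c : Sym2 V → Bool) (M : Finset (Sym2 V)) :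
    ∀ l : List (Sym2 V), -((l.map (wt c M)).sum) ≤ (l.countP (fun e => c e) : ℤ) := by
  intro l
  induction l with
  | nil => simp
  | cons e l ih =>
    simp only [List.map_cons, List.sum_cons, List.countP_cons]
    have he : -(wt c M e) ≤ (if c e = true then 1 else 0 : ℤ) := by
      unfold wt; split <;> [split <;> omega; omega]
    by_cases hc : c e = true
    · rw [if_pos hc] at he; rw [if_pos hc]; push_cast; omega
    · rw [if_neg hc] at he; rw [if_neg hc]; push_cast; omega

/-- an `M`-alternating path of weight at most `-2t` (with `t ≥ 2`)
contains a `t`-good contiguous subpath: even number of edges, weight at most `0`,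
and at least `t` red edges. -/
theorem stmt_7 (G : SimpleGraph V) (c : Sym2 V → Bool) (M : Finset (Sym2 V))
    (hM : IsPM G M) {u v : V} (P : G.Walk u v) (hP : P.IsPath) (halt : IsAlt M P)
    (t : ℕ) (ht : 2 ≤ t)
    (hw : (P.edges.map (wt c M)).sum ≤ -2 * (t : ℤ)) :
    ∃ l : List (Sym2 V), l <:+: P.edges ∧ Even l.length ∧
      (l.map (wt c M)).sum ≤ 0 ∧ t ≤ l.countP (fun e => c e) := by
 classical
  set L := P.edges with hL
  by_cases he : Even L.length
  · refine ⟨L, List.infix_refl L, he, by linarith, ?_⟩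
    have h1 := neg_sum_le_red c M L
    have : (t : ℤ) ≤ (L.countP (fun e => c e) : ℤ) := by linarith
    exact_mod_cast this
  · have hne : L ≠ [] := by intro h; rw [h] at he; simp at he
    have hrest : L.dropLast ++ [L.getLast hne] = L := List.dropLast_append_getLast hne
    have hsum : (L.dropLast.map (wt c M)).sum + wt c M (L.getLast hne)
        = (L.map (wt c M)).sum := by
      conv_rhs => rw [← hrest]
      simp
    have hwb := wt_bounds c M (L.getLast hne)
    refine ⟨L.dropLast, (List.dropLast_prefix L).isInfix, ?_, by linarith [hwb.1], ?_⟩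
    · have hlen : L.dropLast.length + 1 = L.length := by
        have := congrArg List.length hrest
        simpa using this
      rcases Nat.even_or_odd L.length with h | h
      · exact absurd h he
      · rcases h with ⟨k, hk⟩
        exact ⟨k, by omega⟩
    · have h1 := neg_sum_le_red c M L.dropLast
      have h2 : (L.dropLast.map (wt c M)).sum ≤ -2 * (t : ℤ) + 1 := by linarith [hwb.1]
      have : (t : ℤ) ≤ (L.dropLast.countP (fun e => c e) : ℤ) := by push_cast at h1 ⊢; linarith
      exact_mod_cast this
end

section
/- Let (G,c) be a red-blue edge-colored graph with perfect matching M, let t ≥ 2 and x ≥ 0 be integers, and let P be an M-alternating path with |w_M(P)| ≤ x and at least 8t² + 4tx red edges. Then P contains a t-good subpath, i.e., a contiguous subpath P' with an even number of edges, w_M(P') ≤ 0, and at least t red edges. -/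
variable {V : Type*} [Fintype V] [DecidableEq V]

private def nzP : ℤ → Bool := fun a => !decide (a = 0)

private def nuF (w : List ℤ) (i : ℕ) : ℕ := (w.take i).countP nzP
private def sF (w : List ℤ) (i : ℕ) : ℤ := (w.take i).sum

private lemma sum_bounds (w : List ℤ) (hrange : ∀ a ∈ w, a = -1 ∨ a = 0 ∨ a = 1) :
    -(w.countP nzP : ℤ) ≤ w.sum ∧ w.sum ≤ (w.countP nzP : ℤ) := by
  induction w with
  | nil => simp
  | cons a l ih =>
    obtain ⟨h1, h2⟩ := ih fun b hb => hrange b (List.mem_cons_of_mem _ hb)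
    rcases hrange a List.mem_cons_self with h | h | h <;> subst h <;>
      simp only [List.sum_cons, List.countP_cons, nzP] <;> norm_num <;> push_cast <;> omega

private lemma take_decomp (w : List ℤ) {i j : ℕ} (h : i ≤ j) :
    w.take j = w.take i ++ (w.drop i).take (j - i) := by
  rw [← List.take_add, Nat.add_sub_cancel' h]

private lemma nu_decomp (w : List ℤ) {i j : ℕ} (h : i ≤ j) :
    nuF w j = nuF w i + ((w.drop i).take (j - i)).countP nzP := by
  rw [nuF, take_decomp w h, List.countP_append]; rfl

private lemma s_decomp (w : List ℤ) {i j : ℕ} (h : i ≤ j) :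
    sF w j = sF w i + ((w.drop i).take (j - i)).sum := by
  rw [sF, take_decomp w h, List.sum_append]; rfl

private lemma nu_mono (w : List ℤ) {i j : ℕ} (h : i ≤ j) : nuF w i ≤ nuF w j := by
  rw [nu_decomp w h]; omega

private lemma nu_succ (w : List ℤ) (p : ℕ) : nuF w (p + 1) ≤ nuF w p + 1 := by
  rw [nu_decomp w (show p ≤ p + 1 by omega)]
  have hle := List.countP_le_length (l := (w.drop p).take (p + 1 - p)) (p := nzP)
  have hlen : ((w.drop p).take (p + 1 - p)).length ≤ 1 := by
    rw [List.length_take]; omega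
  omega

private lemma mid_range (w : List ℤ) (hrange : ∀ a ∈ w, a = -1 ∨ a = 0 ∨ a = 1)
    (i m : ℕ) : ∀ a ∈ (w.drop i).take m, a = -1 ∨ a = 0 ∨ a = 1 :=
  fun a ha => hrange a (List.mem_of_mem_drop (List.mem_of_mem_take ha))

private lemma key (t x : ℕ) (ht : 2 ≤ t) (w : List ℤ)
    (hrange : ∀ a ∈ w, a = -1 ∨ a = 0 ∨ a = 1)
    (hsum : w.sum ≤ (x : ℤ))
    (hN : 8 * t ^ 2 + 4 * t * x ≤ w.countP nzP) :
    ∃ i m : ℕ, Even ((w.drop i).take m).length ∧ ((w.drop i).take m).sum ≤ 0 ∧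
      t ≤ ((w.drop i).take m).countP nzP := by
  by_contra hcon
  push_neg at hcon
  set L := w.length with hL
  have hnuL : nuF w L = w.countP nzP := by rw [nuF, List.take_length]
  have hsL : sF w L = w.sum := by rw [sF, List.take_length]
  have neg : ∀ i j : ℕ, i ≤ j → j ≤ L → Even (j - i) → t ≤ nuF w j - nuF w i →
      sF w i < sF w j := by
    intro i j hij hjL hev hcount
    have hlen : ((w.drop i).take (j - i)).length = j - i := by
      rw [List.length_take, List.length_drop]; omega
    have hcnt : nuF w j = nuF w i + ((w.drop i).take (j - i)).countP nzP :=
      nu_decomp w hij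
    have hthis := hcon i (j - i) (by rw [hlen]; exact hev)
    rcases le_or_gt ((w.drop i).take (j - i)).sum 0 with hs | hs
    · have := hthis hs; omega
    · rw [s_decomp w hij]; omega
  have claim : ∀ k : ℕ, (t + 1) * k + 1 ≤ nuF w L →
      ∃ j, j ≤ L ∧ Even j ∧ (t + 1) * k ≤ nuF w j ∧ nuF w j ≤ (t + 1) * k + 1 ∧
        (k : ℤ) ≤ sF w j := by
    intro k
    induction k with
    | zero =>
      intro _
      exact ⟨0, Nat.zero_le _, Even.zero, by simp [nuF], by simp [nuF], by simp [sF]⟩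
    | succ k ih =>
      intro hk
      obtain ⟨j, hjL, hjev, hnul, hnuu, hsj⟩ := ih (by
        have : (t + 1) * (k + 1) = (t + 1) * k + (t + 1) := by ring
        omega)
      have hm'pos : 1 ≤ (t + 1) * (k + 1) := by
        have : 1 * 1 ≤ (t + 1) * (k + 1) := Nat.mul_le_mul (by omega) (by omega)
        omega
      have hex : ∃ p, (t + 1) * (k + 1) ≤ nuF w p := ⟨L, by omega⟩
      set j₀ := Nat.find hex with hj₀
      have hj₀spec : (t + 1) * (k + 1) ≤ nuF w j₀ := Nat.find_spec hex
      have hj₀eq : nuF w j₀ = (t + 1) * (k + 1) := by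
        rcases Nat.eq_zero_or_pos j₀ with h0 | h0
        · have h00 : nuF w 0 = 0 := by simp [nuF]
          rw [h0] at hj₀spec; omega
        · have hlt := Nat.find_min hex (m := j₀ - 1) (by omega)
          push_neg at hlt
          have hss := nu_succ w (j₀ - 1)
          have heq : j₀ - 1 + 1 = j₀ := by omega
          rw [heq] at hss
          omega
      have hj₀lt : j₀ < L := by
        by_contra hge
        have h1 := nu_mono w (show L ≤ j₀ by omega)
        have hmul : (t + 1) * (k + 1) = (t + 1) * k + (t + 1) := by ring
        omega
      have hjj₀ : j < j₀ := by
        by_contra hge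
        have h1 := nu_mono w (show j₀ ≤ j by omega)
        have hmul : (t + 1) * (k + 1) = (t + 1) * k + (t + 1) := by ring
        omega
      set j' := if Even j₀ then j₀ else j₀ + 1 with hj'
      have hj'ev : Even j' := by
        rcases Nat.even_or_odd j₀ with h | h
        · simpa [hj', h] using h
        · simp only [hj', Nat.not_even_iff_odd.mpr h, if_false]
          exact Odd.add_one h
      have hj'ge : j₀ ≤ j' := by rw [hj']; split <;> omega
      have hj'le : j' ≤ j₀ + 1 := by rw [hj']; split <;> omega
      have hj'L : j' ≤ L := by omega
      have hnuj'l : (t + 1) * (k + 1) ≤ nuF w j' := hj₀eq ▸ nu_mono w hj'ge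
      have hnuj'u : nuF w j' ≤ (t + 1) * (k + 1) + 1 := by
        rcases Nat.lt_or_ge j' (j₀ + 1) with h | h
        · have heq : j' = j₀ := by omega
          rw [heq]; omega
        · have heq : j' = j₀ + 1 := by omega
          have := nu_succ w j₀
          rw [heq]; omega
      have hcount : t ≤ nuF w j' - nuF w j := by
        have hmul : (t + 1) * (k + 1) = (t + 1) * k + (t + 1) := by ring
        omega
      have hstep : sF w j < sF w j' := by
        apply neg j j' (by omega) hj'L _ hcount
        exact (Nat.even_sub (by omega)).mpr (by simp [hj'ev, hjev])
      exact ⟨j', hj'L, hj'ev, hnuj'l, hnuj'u, by push_cast; omega⟩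
  set N := nuF w L with hNdef
  have hNbig : 8 * t ^ 2 + 4 * t * x ≤ N := by omega
  obtain ⟨q, r, hr, heN⟩ : ∃ q r, r < t + 1 ∧ N = (t + 1) * q + r + 1 := by
    refine ⟨(N - 1) / (t + 1), (N - 1) % (t + 1), Nat.mod_lt _ (by omega), ?_⟩
    have h1 : 1 ≤ N := by nlinarith
    have := Nat.div_add_mod (N - 1) (t + 1)
    omega
  have hKbig : x + t + 2 ≤ q := by
    have hmm : (t + 1) * (x + t + 2) ≤ (t + 1) * q := by nlinarith
    exact Nat.le_of_mul_le_mul_left hmm (by omega)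
  obtain ⟨j, hjL, _, hnl, _, hsj⟩ := claim q (by omega)
  have hmidrange := mid_range w hrange j (L - j)
  obtain ⟨hlow, _⟩ := sum_bounds _ hmidrange
  have hsd := s_decomp w hjL
  have hnd := nu_decomp w hjL
  have hnuj : nuF w j ≤ N := nu_mono w hjL
  have hml : ((w.drop j).take (L - j)).countP nzP = N - nuF w j := by omega
  have hA : N - nuF w j ≤ t + 1 := by omega
  rw [hml] at hlow
  have hfin : (x : ℤ) + 1 ≤ sF w L := by
    have hq : (x : ℤ) + t + 2 ≤ (q : ℤ) := by exact_mod_cast hKbig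
    have hA' : ((N - nuF w j : ℕ) : ℤ) ≤ (t : ℤ) + 1 := by exact_mod_cast hA
    omega
  rw [hsL] at hfin
  omega

/-- an `M`-alternating path with `|w_M(P)| ≤ x` and at least
`8t² + 4tx` red edges contains a `t`-good contiguous subpath. -/
theorem stmt_8 (G : SimpleGraph V) (c : Sym2 V → Bool) (M : Finset (Sym2 V))
    (hM : IsPM G M) {u v : V} (P : G.Walk u v) (hP : P.IsPath) (halt : IsAlt M P)
    (t x : ℕ) (ht : 2 ≤ t)
    (hw : |(P.edges.map (wt c M)).sum| ≤ (x : ℤ))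
    (hred : 8 * t ^ 2 + 4 * t * x ≤ P.edges.countP (fun e => c e)) :
    ∃ l : List (Sym2 V), l <:+: P.edges ∧ Even l.length ∧
      (l.map (wt c M)).sum ≤ 0 ∧ t ≤ l.countP (fun e => c e) := by
  classical
  set w : List ℤ := P.edges.map (wt c M) with hwdef
  have hfun : (nzP ∘ wt c M) = (fun e => c e) := by
    funext e
    simp only [Function.comp, nzP, wt]
    by_cases h : c e
    · simp [h]
      split <;> decide
    · simp [h]
  have hrange : ∀ a ∈ w, a = -1 ∨ a = 0 ∨ a = 1 := by
    intro a ha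
    rw [hwdef, List.mem_map] at ha
    obtain ⟨e, _, rfl⟩ := ha
    unfold wt
    split
    · split
      · left; rfl
      · right; right; rfl
    · right; left; rfl
  have hsum : w.sum ≤ (x : ℤ) := (abs_le.mp hw).2
  have hcnt : w.countP nzP = P.edges.countP (fun e => c e) := by
    rw [hwdef, List.countP_map, hfun]
  obtain ⟨i, m, h1, h2, h3⟩ := key t x ht w hrange hsum (by omega)
  refine ⟨(P.edges.drop i).take m, ?_, ?_, ?_, ?_⟩
  · exact ⟨P.edges.take i, (P.edges.drop i).drop m, by
      rw [List.append_assoc, List.take_append_drop, List.take_append_drop]⟩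
  · have hl : ((P.edges.drop i).take m).length = ((w.drop i).take m).length := by
      simp [hwdef]
    rw [hl]; exact h1
  · have hm : ((P.edges.drop i).take m).map (wt c M) = (w.drop i).take m := by
      rw [hwdef, List.map_take, List.map_drop]
    rw [hm]; exact h2
  · have hc : ((P.edges.drop i).take m).countP (fun e => c e)
        = ((w.drop i).take m).countP nzP := by
      rw [hwdef, ← List.map_drop, ← List.map_take, List.countP_map, hfun]
    rw [hc]; exact h3
end

section
/- Let G be a chain graph. Then every cycle C in G of length at least 8 has two adjacent odd chords. -/
variable {V : Type*} [Fintype V] [DecidableEq V]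

/-- The `i`-th vertex (cyclically, indices mod `C.length`) along a closed walk `C`. -/
def cvtx {G : SimpleGraph V} {v : V} (C : G.Walk v v) (i : ℕ) : V :=
  C.support.tail.getD (i % C.length) v

/-- Positions `i, j` on the cycle `C` carry a chord: the corresponding vertices are
adjacent in `G` but the edge is not an edge of `C`. -/
def IsChordAt {G : SimpleGraph V} {v : V} (C : G.Walk v v) (i j : ℕ) : Prop :=
  G.Adj (cvtx C i) (cvtx C j) ∧ s(cvtx C i, cvtx C j) ∉ C.edges

/-- `C` has an odd chord: a chord splitting `C` into two odd-length paths. -/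
def HasOddChord {G : SimpleGraph V} {v : V} (C : G.Walk v v) : Prop :=
  ∃ i j : ℕ, i < j ∧ j < C.length ∧ Odd (j - i) ∧ IsChordAt C i j

/-- `C` has two adjacent odd chords: chords `{u,v₀} = {cvtx i, cvtx (i+d)}` and
`{x,y} = {cvtx (i+d+1), cvtx (i+n-1)}` whose endpoints appear in cyclic order
`u, v₀, x, y` with `{v₀,x}` and `{y,u}` edges of `C`, both chords odd. -/
def HasTwoAdjOddChords {G : SimpleGraph V} {v : V} (C : G.Walk v v) : Prop :=
  ∃ i d : ℕ, 1 ≤ d ∧ d + 3 ≤ C.length ∧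
    IsChordAt C i (i + d) ∧ (Odd d ∨ Odd (C.length - d)) ∧
    IsChordAt C (i + d + 1) (i + C.length - 1) ∧
    (Odd (C.length - d - 2) ∨ Odd (d + 2))

/-- `G` is a chain graph: bipartite with the neighborhoods on each side totally
ordered by inclusion. -/
def IsChainGraph (G : SimpleGraph V) : Prop :=
  ∃ A : Set V,
    (∀ u w : V, G.Adj u w → ((u ∈ A) ↔ w ∉ A)) ∧
    (∀ u w : V, u ∈ A → w ∈ A →
      (G.neighborSet u ⊆ G.neighborSet w ∨ G.neighborSet w ⊆ G.neighborSet u)) ∧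
    (∀ u w : V, u ∉ A → w ∉ A →
      (G.neighborSet u ⊆ G.neighborSet w ∨ G.neighborSet w ⊆ G.neighborSet u))

set_option linter.unusedSectionVars false
namespace StmtTwelve

open SimpleGraph

variable {G : SimpleGraph V} {u w v : V}

lemma support_getD (W : G.Walk u w) (d : V) :
    ∀ j, j ≤ W.length → W.support.getD j d = W.getVert j := by
  induction W with
  | nil =>
    intro j hj
    simp only [Walk.length_nil, Nat.le_zero] at hj
    subst hj; simp [Walk.support_nil]
  | cons h p ih =>
    intro j hj
    cases j with
    | zero => simp [Walk.support_cons, Walk.getVert_zero]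
    | succ j =>
      simp only [Walk.support_cons, List.getD_cons_succ, Walk.getVert_cons_succ]
      exact ih _ (by simpa using hj)

lemma tail_getD (W : G.Walk u w) (d : V) {j : ℕ} (hj : j < W.length) :
    W.support.tail.getD j d = W.getVert (j + 1) := by
  have h := support_getD W d (j + 1) (by omega)
  rwa [Walk.support_eq_cons, List.getD_cons_succ] at h

lemma cvtx_eq_getVert (C : G.Walk v v) (hn : 0 < C.length) (i : ℕ) :
    cvtx C i = C.getVert (i % C.length + 1) :=
  tail_getD C v (Nat.mod_lt _ hn)

lemma cvtx_mod (C : G.Walk v v) (i : ℕ) : cvtx C (i % C.length) = cvtx C i := by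
  unfold cvtx
  rw [Nat.mod_mod_of_dvd _ dvd_rfl]

lemma cvtx_add_length (C : G.Walk v v) (i : ℕ) : cvtx C (i + C.length) = cvtx C i := by
  unfold cvtx
  rw [Nat.add_mod_right]

lemma cvtx_adj (C : G.Walk v v) (hn : 0 < C.length) (i : ℕ) :
    G.Adj (cvtx C i) (cvtx C (i + 1)) := by
  rw [cvtx_eq_getVert C hn, cvtx_eq_getVert C hn]
  have key : (i % C.length + 1) % C.length = (i + 1) % C.length :=
    (Nat.ModEq.add_right 1 (Nat.mod_modEq i C.length))
  rcases Nat.lt_or_ge (i % C.length + 1) C.length with h | h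
  · have h2 : (i + 1) % C.length = i % C.length + 1 := by
      rw [← key, Nat.mod_eq_of_lt h]
    rw [h2]
    exact C.adj_getVert_succ h
  · have hle : i % C.length + 1 = C.length := by
      have := Nat.mod_lt i hn
      omega
    have h2 : (i + 1) % C.length = 0 := by
      rw [← key, hle, Nat.mod_self]
    rw [h2, hle, C.getVert_length]
    have := C.adj_getVert_succ (i := 0) hn
    rwa [C.getVert_zero] at this

lemma cvtx_eq_iff (C : G.Walk v v) (hC : C.IsCycle) (hn : 0 < C.length) {i j : ℕ} :
    cvtx C i = cvtx C j ↔ i % C.length = j % C.length := by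
  constructor
  · intro h
    have hlen : C.support.tail.length = C.length := by
      have := C.length_support
      simp only [List.length_tail, this]; omega
    have hi : i % C.length < C.support.tail.length := by rw [hlen]; exact Nat.mod_lt _ hn
    have hj : j % C.length < C.support.tail.length := by rw [hlen]; exact Nat.mod_lt _ hn
    have h' : C.support.tail[i % C.length] = C.support.tail[j % C.length] := by
      have e1 : C.support.tail.getD (i % C.length) v = C.support.tail[i % C.length] :=
        List.getD_eq_getElem _ _ hi
      have e2 : C.support.tail.getD (j % C.length) v = C.support.tail[j % C.length] :=
        List.getD_eq_getElem _ _ hj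
      unfold cvtx at h
      rw [e1, e2] at h
      exact h
    exact (List.Nodup.getElem_inj_iff hC.support_nodup).mp h'
  · intro h
    unfold cvtx
    rw [h]

lemma mem_edges (W : G.Walk u w) {e : Sym2 V} (he : e ∈ W.edges) :
    ∃ i, i < W.length ∧ e = s(W.getVert i, W.getVert (i + 1)) := by
  induction W with
  | nil => simp [Walk.edges_nil] at he
  | cons h p ih =>
    rw [Walk.edges_cons, List.mem_cons] at he
    rcases he with rfl | he
    · exact ⟨0, by simp [Walk.getVert_zero, Walk.getVert_cons_succ, p.getVert_zero]⟩
    · obtain ⟨i, hi, hei⟩ := ih he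
      exact ⟨i + 1, by simpa using hi, by simpa [Walk.getVert_cons_succ] using hei⟩

lemma getVert_eq_cvtx_pred (C : G.Walk v v) (hn : 0 < C.length) {i : ℕ} (hi : i < C.length) :
    C.getVert i = cvtx C (i + C.length - 1) := by
  rcases Nat.eq_zero_or_pos i with rfl | hpos
  · rw [cvtx_eq_getVert C hn, C.getVert_zero]
    have : (0 + C.length - 1) % C.length = C.length - 1 := by
      rw [Nat.zero_add, Nat.mod_eq_of_lt (by omega)]
    rw [this]
    have : C.length - 1 + 1 = C.length := by omega
    rw [this, C.getVert_length]
  · rw [cvtx_eq_getVert C hn]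
    have : (i + C.length - 1) % C.length = i - 1 := by
      have h1 : i + C.length - 1 = (i - 1) + C.length := by omega
      rw [h1, Nat.add_mod_right, Nat.mod_eq_of_lt (by omega)]
    rw [this]
    congr 1
    omega

lemma not_edge (C : G.Walk v v) (hC : C.IsCycle) (hn : 0 < C.length) {a g : ℕ}
    (h2 : 2 ≤ g) (hg : g ≤ C.length - 2) :
    s(cvtx C a, cvtx C (a + g)) ∉ C.edges := by
  intro hmem
  obtain ⟨i, hi, hei⟩ := mem_edges C hmem
  have hv1 : C.getVert i = cvtx C (i + C.length - 1) := getVert_eq_cvtx_pred C hn hi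
  have hv2 : C.getVert (i + 1) = cvtx C i := by
    rw [cvtx_eq_getVert C hn, Nat.mod_eq_of_lt hi]
  rw [hv1, hv2, Sym2.eq_iff] at hei
  have hglt : g < C.length := by omega
  rcases hei with ⟨ha, hb⟩ | ⟨ha, hb⟩
  · -- a ≡ i + n - 1, a + g ≡ i
    have e1 := (cvtx_eq_iff C hC hn).mp ha
    have e2 := (cvtx_eq_iff C hC hn).mp hb
    -- (a+g) % n = i % n, a % n = (i + n - 1) % n; derive g ≡ 1 [MOD n]
    have : (a + g) % C.length = (a + 1) % C.length := by
      rw [e2, Nat.mod_eq_of_lt hi]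
      have h3 : a + 1 = a + (C.length) + 1 - C.length := by omega
      have h4 : (a + 1) % C.length = (i + C.length - 1 + 1) % C.length := by
        have := Nat.ModEq.add_right 1 (e1 : a % C.length = (i + C.length - 1) % C.length)
        exact this
      rw [h4]
      have h5 : i + C.length - 1 + 1 = i + C.length := by omega
      rw [h5, Nat.add_mod_right, Nat.mod_eq_of_lt hi]
    have hmod : g % C.length = 1 % C.length := Nat.ModEq.add_left_cancel' a this
    rw [Nat.mod_eq_of_lt hglt, Nat.mod_eq_of_lt (by omega)] at hmod
    omega
  · -- a ≡ i, a + g ≡ i + n - 1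
    have e1 := (cvtx_eq_iff C hC hn).mp ha
    have e2 := (cvtx_eq_iff C hC hn).mp hb
    have : (a + g) % C.length = (a + (C.length - 1)) % C.length := by
      rw [e2]
      have h4 : (a + (C.length - 1)) % C.length = (i + (C.length - 1)) % C.length :=
        Nat.ModEq.add_right _ (e1 : a % C.length = i % C.length)
      rw [h4]
      congr 1
      omega
    have hmod : g % C.length = (C.length - 1) % C.length :=
      Nat.ModEq.add_left_cancel' a this
    rw [Nat.mod_eq_of_lt hglt, Nat.mod_eq_of_lt (by omega)] at hmod
    omega

end StmtTwelve

namespace StmtTwelve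
open SimpleGraph

variable {G : SimpleGraph V} {v : V}

lemma claim1 (C : G.Walk v v) (hC : C.IsCycle) (hlen : 8 ≤ C.length) {a g : ℕ}
    (hg4 : 4 ≤ g) (hgn : g + 4 ≤ C.length) (hge : g % 2 = 0)
    (h1 : G.neighborSet (cvtx C a) ⊆ G.neighborSet (cvtx C (a + g)))
    (h2 : G.neighborSet (cvtx C (a + 1)) ⊆ G.neighborSet (cvtx C (a + g + 1))) :
    HasTwoAdjOddChords C := by
  have hn : 0 < C.length := by omega
  refine ⟨a + 1, g - 1, by omega, by omega, ?_, ?_, ?_, ?_⟩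
  · have e : a + 1 + (g - 1) = a + g := by omega
    rw [e]
    constructor
    · have hadj : cvtx C (a + 1) ∈ G.neighborSet (cvtx C a) := by
        rw [SimpleGraph.mem_neighborSet]; exact cvtx_adj C hn a
      exact ((SimpleGraph.mem_neighborSet _ _ _).mp (h1 hadj)).symm
    · have e2 : a + g = a + 1 + (g - 1) := by omega
      rw [e2]
      exact not_edge C hC hn (by omega) (by omega)
  · left; rw [Nat.odd_iff]; omega
  · have e : a + 1 + (g - 1) + 1 = a + g + 1 := by omega
    have e2 : a + 1 + C.length - 1 = a + C.length := by omega
    rw [e, e2]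
    constructor
    · rw [cvtx_add_length]
      have hadj : cvtx C a ∈ G.neighborSet (cvtx C (a + 1)) := by
        rw [SimpleGraph.mem_neighborSet]; exact (cvtx_adj C hn a).symm
      exact (SimpleGraph.mem_neighborSet _ _ _).mp (h2 hadj)
    · have e3 : a + C.length = a + g + 1 + (C.length - g - 1) := by omega
      rw [e3]
      exact not_edge C hC hn (by omega) (by omega)
  · right; rw [Nat.odd_iff]; omega

lemma exists_top (r : ℕ → ℕ → Prop) (htrans : ∀ a b c, r a b → r b c → r a c) :
    ∀ s : Finset ℕ, s.Nonempty → (∀ i ∈ s, ∀ j ∈ s, r i j ∨ r j i) →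
    ∃ k ∈ s, ∀ j ∈ s, r j k := by
  intro s
  induction s using Finset.induction_on with
  | empty => intro h; simp at h
  | @insert a s ha ih =>
    intro _ htot
    by_cases hs : s.Nonempty
    · obtain ⟨m, hm, hmax⟩ := ih hs
        (fun i hi j hj => htot i (Finset.mem_insert_of_mem hi) j (Finset.mem_insert_of_mem hj))
      rcases htot a (Finset.mem_insert_self a s) m (Finset.mem_insert_of_mem hm) with hr | hr
      · refine ⟨m, Finset.mem_insert_of_mem hm, ?_⟩
        intro j hj
        rcases Finset.mem_insert.mp hj with rfl | hj
        · exact hr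
        · exact hmax j hj
      · refine ⟨a, Finset.mem_insert_self a s, ?_⟩
        intro j hj
        rcases Finset.mem_insert.mp hj with rfl | hj
        · rcases htot j (Finset.mem_insert_self j s) j (Finset.mem_insert_self j s) with h | h <;>
            exact h
        · exact htrans j m a (hmax j hj) hr
    · have hemp : s = ∅ := Finset.not_nonempty_iff_eq_empty.mp hs
      subst hemp
      refine ⟨a, Finset.mem_insert_self a ∅, ?_⟩
      intro j hj
      rcases Finset.mem_insert.mp hj with rfl | hj
      · rcases htot j (Finset.mem_insert_self j ∅) j (Finset.mem_insert_self j ∅) with h | h <;>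
          exact h
      · simp at hj

end StmtTwelve

open StmtTwelve in
/-- in a chain graph, every cycle of length at least 8 has two
adjacent odd chords. -/
theorem stmt_12 (G : SimpleGraph V) (hchain : IsChainGraph G)
    (v : V) (C : G.Walk v v) (hC : C.IsCycle) (hlen : 8 ≤ C.length) :
    HasTwoAdjOddChords C := by
  classical
  obtain ⟨A, hA, htA, htB⟩ := hchain
  have hn : 0 < C.length := by omega
  have hflip : ∀ i, (cvtx C i ∈ A ↔ cvtx C (i + 1) ∉ A) := fun i => hA _ _ (cvtx_adj C hn i)
  have hpar : ∀ i, (cvtx C i ∈ A ↔ (cvtx C 0 ∈ A ↔ Even i)) := by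
    intro i
    induction i with
    | zero => simp
    | succ i ih =>
      have h1 := hflip i
      rw [Nat.even_add_one]
      tauto
  have hCeq : cvtx C C.length = cvtx C 0 := by
    have := cvtx_add_length C 0
    simpa using this
  have heven : Even C.length := by
    have h0 := hpar C.length
    rw [hCeq] at h0
    tauto
  have h2dvd : (2 : ℕ) ∣ C.length := heven.two_dvd
  have hnmod : C.length % 2 = 0 := Nat.even_iff.mp heven
  have hside : ∀ i j, i % 2 = j % 2 → (cvtx C i ∈ A ↔ cvtx C j ∈ A) := by
    intro i j hij
    have hi := hpar i; have hj := hpar j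
    have he : Even i ↔ Even j := by rw [Nat.even_iff, Nat.even_iff, hij]
    tauto
  have par : ∀ i j, i % 2 = j % 2 →
      (G.neighborSet (cvtx C i) ⊆ G.neighborSet (cvtx C j) ∨
        G.neighborSet (cvtx C j) ⊆ G.neighborSet (cvtx C i)) := by
    intro i j hij
    by_cases h : cvtx C i ∈ A
    · exact htA _ _ h ((hside i j hij).mp h)
    · exact htB _ _ h (fun hc => h ((hside i j hij).mpr hc))
  obtain ⟨k, hkmem, hktop⟩ :=
    exists_top (fun i j => G.neighborSet (cvtx C i) ⊆ G.neighborSet (cvtx C j))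
      (fun a b c h1 h2 => h1.trans h2)
      ((Finset.range C.length).filter (fun j => j % 2 = 1))
      ⟨1, Finset.mem_filter.mpr ⟨Finset.mem_range.mpr (by omega), rfl⟩⟩
      (fun i hi j hj => par i j (by
        have h1 := (Finset.mem_filter.mp hi).2
        have h2 := (Finset.mem_filter.mp hj).2
        omega))
  obtain ⟨hkn, hk2⟩ := Finset.mem_filter.mp hkmem
  rw [Finset.mem_range] at hkn
  have hmax : ∀ j, j % 2 = 1 → G.neighborSet (cvtx C j) ⊆ G.neighborSet (cvtx C k) := by
    intro j hj
    rw [← cvtx_mod C j]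
    exact hktop _ (Finset.mem_filter.mpr ⟨Finset.mem_range.mpr (Nat.mod_lt _ hn),
      by rw [Nat.mod_mod_of_dvd _ h2dvd]; exact hj⟩)
  obtain ⟨K, hK⟩ : ∃ K, K = k + C.length := ⟨_, rfl⟩
  have hK8 : 8 ≤ K := by omega
  have hKmod : K % 2 = 1 := by omega
  rcases par (K - 3) (K + 1) (by omega) with hD1 | hF2
  · -- pair of cycle edges (K-4, K-3) and (K, K+1)
    refine claim1 C hC hlen (a := K - 4) (g := 4) (by norm_num) (by omega) (by norm_num) ?_ ?_
    · rw [show K - 4 + 4 = k + C.length by omega, cvtx_add_length]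
      exact hmax (K - 4) (by omega)
    · rw [show K - 4 + 1 = K - 3 by omega, show K - 4 + 4 + 1 = K + 1 by omega]
      exact hD1
  rcases par (K + 3) (K - 1) (by omega) with hD2 | hF1
  · -- pair (K+3, K+4) and (K-1, K)
    refine claim1 C hC hlen (a := K + 3) (g := C.length - 4) (by omega) (by omega) (by omega)
      ?_ ?_
    · rw [show K + 3 + (C.length - 4) = K - 1 + C.length by omega, cvtx_add_length]
      exact hD2
    · rw [show K + 3 + 1 = K + 4 by omega,
        show K + 3 + (C.length - 4) + 1 = k + C.length + C.length by omega, cvtx_add_length,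
        cvtx_add_length]
      exact hmax (K + 4) (by omega)
  rcases par (K + 2) (K - 2) (by omega) with hD3 | hF3
  · -- pair (K+1, K+2) and (K-3, K-2)
    refine claim1 C hC hlen (a := K + 1) (g := C.length - 4) (by omega) (by omega) (by omega)
      ?_ ?_
    · rw [show K + 1 + (C.length - 4) = K - 3 + C.length by omega, cvtx_add_length]
      exact hF2
    · rw [show K + 1 + 1 = K + 2 by omega,
        show K + 1 + (C.length - 4) + 1 = K - 2 + C.length by omega, cvtx_add_length]
      exact hD3
  · -- pair (K-2, K-1) and (K+2, K+3)
    refine claim1 C hC hlen (a := K - 2) (g := 4) (by norm_num) (by omega) (by norm_num) ?_ ?_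
    · rw [show K - 2 + 4 = K + 2 by omega]
      exact hF3
    · rw [show K - 2 + 1 = K - 1 by omega, show K - 2 + 4 + 1 = K + 3 by omega]
      exact hF1
end

section
/- Let G be a unit interval graph. Then every cycle C of even length at least 8 in G contains two adjacent odd chords. -/
variable {V : Type*} [Fintype V] [DecidableEq V]

theorem uig_core {n : ℕ} (hn8 : 8 ≤ n) (hev : Even n) (z : ℕ → ℝ)
    (hper : ∀ i, z (i + n) = z i) (hstep : ∀ i, |z (i + 1) - z i| ≤ 1) :
    ∃ p d : ℕ, Odd d ∧ 3 ≤ d ∧ d + 5 ≤ n ∧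
      |z p - z (p + d)| ≤ 1 ∧ |z (p + n - 1) - z (p + d + 1)| ≤ 1 := by
  obtain ⟨m, hm⟩ := hev
  by_contra hcon
  push_neg at hcon
  -- z reduces mod n
  have hmul : ∀ k i, z (i + n * k) = z i := by
    intro k
    induction k with
    | zero => simp
    | succ k ih =>
      intro i
      have : i + n * (k + 1) = (i + n * k) + n := by ring
      rw [this, hper, ih]
  have hmod : ∀ i, z i = z (i % n) := by
    intro i
    conv_lhs => rw [← Nat.mod_add_div i n]
    exact hmul _ _
  -- KEY lemma
  have key : ∀ J e : ℕ, Even e → 4 ≤ e → e + 4 ≤ n →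
      z (J + e) ≤ z J → z (J + 1 + e) < z (J + 1) := by
    intro J e he h4 hen hA
    by_contra hB
    push_neg at hB
    obtain ⟨b, hb⟩ := he
    have hodd : Odd (n - e - 1) := ⟨m - b - 1, by omega⟩
    have h3 : 3 ≤ n - e - 1 := by omega
    have h5 : (n - e - 1) + 5 ≤ n := by omega
    have s1 := hstep (J + e)
    have s2 := hstep J
    rw [abs_sub_le_iff] at s1 s2
    have eB : J + 1 + e = J + e + 1 := by omega
    rw [eB] at hB
    -- chord 1 bound
    have e1 : J + e + 1 + (n - e - 1) = J + n := by omega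
    have c1 : |z (J + e + 1) - z (J + e + 1 + (n - e - 1))| ≤ 1 := by
      rw [e1, hper]
      rw [abs_sub_le_iff]
      constructor <;> linarith
    have hc := hcon (J + e + 1) (n - e - 1) hodd h3 h5 c1
    -- chord 2 bound
    have e2 : J + e + 1 + n - 1 = J + e + n := by omega
    have e3 : J + e + 1 + (n - e - 1) + 1 = J + 1 + n := by omega
    rw [e2, e3, hper, hper] at hc
    have : |z (J + e) - z (J + 1)| ≤ 1 := by
      rw [abs_sub_le_iff]
      constructor <;> linarith
    linarith
  -- base point: max over even residues
  have h0F : (0 : ℕ) ∈ (Finset.range n).filter (fun i => Even i) := by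
    simp; omega
  obtain ⟨j0, hj0F, hj0max⟩ :=
    Finset.exists_max_image ((Finset.range n).filter (fun i => Even i)) z ⟨0, h0F⟩
  have hj0even : Even j0 := (Finset.mem_filter.mp hj0F).2
  have base : ∀ e : ℕ, Even e → 4 ≤ e → e + 4 ≤ n → z (j0 + e) ≤ z j0 := by
    intro e he h4 hen
    rw [hmod (j0 + e)]
    apply hj0max
    rw [Finset.mem_filter, Finset.mem_range]
    constructor
    · exact Nat.mod_lt _ (by omega)
    · have : (j0 + e) % n % 2 = (j0 + e) % 2 := Nat.mod_mod_of_dvd _ ⟨m, by omega⟩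
      rw [Nat.even_iff] at hj0even he ⊢
      rw [this, Nat.add_mod, hj0even, he]
  -- iterate
  have Q : ∀ r e : ℕ, Even e → 4 ≤ e → e + 4 ≤ n → z (j0 + r + 1 + e) < z (j0 + r + 1) := by
    intro r
    induction r with
    | zero =>
      intro e he h4 hen
      have := key j0 e he h4 hen (base e he h4 hen)
      simpa using this
    | succ r ih =>
      intro e he h4 hen
      have := key (j0 + r + 1) e he h4 hen (le_of_lt (ih e he h4 hen))
      have eq1 : j0 + r + 1 + 1 + e = j0 + (r + 1) + 1 + e := by omega
      have eq2 : j0 + r + 1 + 1 = j0 + (r + 1) + 1 := by omega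
      rwa [eq1, eq2] at this
  have hev4 : Even (n - 4) := ⟨m - 2, by omega⟩
  have h1 := Q 1 (n - 4) hev4 (by omega) (by omega)
  have h2 := Q (n - 3) 4 ⟨2, rfl⟩ (by omega) (by omega)
  have eqa : j0 + 1 + 1 + (n - 4) = j0 + (n - 2) := by omega
  have eqb : j0 + 1 + 1 = j0 + 2 := by omega
  have eqc : j0 + (n - 3) + 1 + 4 = j0 + 2 + n := by omega
  have eqd : j0 + (n - 3) + 1 = j0 + (n - 2) := by omega
  rw [eqa, eqb] at h1
  rw [eqc, eqd, hper] at h2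
  linarith

private lemma walk_support_getD {W : Type*} {G : SimpleGraph W} {a b c : W} (p : G.Walk a b) :
    ∀ i, i ≤ p.length → p.support.getD i c = p.getVert i := by
  induction p with
  | nil =>
    intro i hi
    simp only [SimpleGraph.Walk.length_nil, Nat.le_zero] at hi
    subst hi
    simp [SimpleGraph.Walk.support_nil, SimpleGraph.Walk.getVert_zero]
  | cons h q ih =>
    intro i hi
    cases i with
    | zero => simp [SimpleGraph.Walk.support_cons, SimpleGraph.Walk.getVert_zero]
    | succ i =>
      rw [SimpleGraph.Walk.support_cons, List.getD_cons_succ,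
        SimpleGraph.Walk.getVert_cons_succ]
      exact ih i (by simpa using hi)

private lemma walk_edge_mem {W : Type*} {G : SimpleGraph W} {a b : W} (p : G.Walk a b) :
    ∀ e ∈ p.edges, ∃ r, r < p.length ∧ e = s(p.getVert r, p.getVert (r + 1)) := by
  induction p with
  | nil => simp
  | cons h q ih =>
    intro e he
    rw [SimpleGraph.Walk.edges_cons] at he
    rcases List.mem_cons.mp he with rfl | he'
    · refine ⟨0, by simp, ?_⟩
      rw [SimpleGraph.Walk.getVert_zero]
      rw [SimpleGraph.Walk.getVert_cons_succ]
      rw [SimpleGraph.Walk.getVert_zero]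
    · obtain ⟨r, hr, he2⟩ := ih e he'
      refine ⟨r + 1, by simp [SimpleGraph.Walk.length_cons]; omega, ?_⟩
      rw [SimpleGraph.Walk.getVert_cons_succ, SimpleGraph.Walk.getVert_cons_succ]
      exact he2

/-- in a unit interval graph, every even cycle of length at least 8
contains two adjacent odd chords. -/
theorem stmt_13 (G : SimpleGraph V)
    (huig : ∃ I : V → ℝ, ∀ u w : V, u ≠ w → (G.Adj u w ↔ |I u - I w| ≤ 1))
    (v : V) (C : G.Walk v v) (hC : C.IsCycle)
    (heven : Even C.length) (hlen : 8 ≤ C.length) :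
    HasTwoAdjOddChords C := by
  obtain ⟨I, hI⟩ := huig
  obtain ⟨n, hn⟩ : ∃ n, C.length = n := ⟨_, rfl⟩
  rw [hn] at heven hlen
  have hn0 : 0 < n := by omega
  -- cvtx in terms of getVert
  have hgetD : ∀ k : ℕ, cvtx C k = C.getVert (k % n + 1) := by
    intro k
    show C.support.tail.getD (k % C.length) v = _
    rw [hn]
    have h1 : C.support.tail.getD (k % n) v = C.support.getD (k % n + 1) v := by
      conv_rhs => rw [C.support_eq_cons]
      rw [List.getD_cons_succ]
    rw [h1, walk_support_getD]
    have : k % n < n := Nat.mod_lt _ hn0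
    omega
  have hlen_tail : C.support.tail.length = n := by
    rw [List.length_tail, SimpleGraph.Walk.length_support, hn]
    omega
  -- injectivity
  have hcv : ∀ a b : ℕ, cvtx C a = cvtx C b ↔ a % n = b % n := by
    intro a b
    have ha : a % n < C.support.tail.length := by rw [hlen_tail]; exact Nat.mod_lt _ hn0
    have hb : b % n < C.support.tail.length := by rw [hlen_tail]; exact Nat.mod_lt _ hn0
    show C.support.tail.getD (a % C.length) v = C.support.tail.getD (b % C.length) v ↔ _
    rw [hn, List.getD_eq_getElem _ _ ha, List.getD_eq_getElem _ _ hb]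
    exact hC.support_nodup.getElem_inj_iff
  have hne : ∀ a b : ℕ, a % n ≠ b % n → cvtx C a ≠ cvtx C b := by
    intro a b h hc
    exact h ((hcv a b).mp hc)
  have hfar : ∀ a g : ℕ, 0 < g → g < n → a % n ≠ (a + g) % n := by
    intro a g h0 hgn heq
    have hdvd := (Nat.modEq_iff_dvd' (Nat.le_add_right a g)).mp heq
    rw [Nat.add_sub_cancel_left] at hdvd
    have := Nat.le_of_dvd h0 hdvd
    omega
  -- getVert in terms of cvtx
  have hgv : ∀ r : ℕ, r ≤ n → C.getVert r = cvtx C (n - 1 + r) := by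
    intro r hr
    rw [hgetD]
    rcases Nat.eq_zero_or_pos r with rfl | hr1
    · have e1 : (n - 1 + 0) % n = n - 1 := by
        rw [Nat.add_zero]; exact Nat.mod_eq_of_lt (by omega)
      rw [e1]
      have e2 : n - 1 + 1 = n := by omega
      rw [e2]
      rw [SimpleGraph.Walk.getVert_zero]
      rw [show n = C.length from hn.symm, SimpleGraph.Walk.getVert_length]
    · have e1 : (n - 1 + r) % n = r - 1 := by
        rw [Nat.mod_eq_sub_mod (by omega)]
        rw [show n - 1 + r - n = r - 1 by omega]
        exact Nat.mod_eq_of_lt (by omega)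
      rw [e1, show r - 1 + 1 = r by omega]
  -- successor mod
  have hsucc : ∀ k : ℕ, ((k + 1) % n = k % n + 1 ∧ k % n + 1 < n) ∨
      ((k + 1) % n = 0 ∧ k % n = n - 1) := by
    intro k
    have hk : k % n < n := Nat.mod_lt _ hn0
    have h1n : 1 % n = 1 := Nat.mod_eq_of_lt (by omega)
    by_cases h : k % n + 1 < n
    · left
      exact ⟨by rw [Nat.add_mod, h1n, Nat.mod_eq_of_lt h], h⟩
    · right
      have hk1 : k % n = n - 1 := by omega
      refine ⟨?_, hk1⟩
      rw [Nat.add_mod, h1n, hk1, show n - 1 + 1 = n by omega, Nat.mod_self]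
  -- consecutive adjacency
  have hadjk : ∀ k : ℕ, G.Adj (cvtx C k) (cvtx C (k + 1)) := by
    intro k
    rw [hgetD k, hgetD (k + 1)]
    have hlenn : n ≤ C.length := by omega
    rcases hsucc k with ⟨h1, h2⟩ | ⟨h1, h2⟩
    · rw [h1]
      exact C.adj_getVert_succ (by omega)
    · rw [h1, h2, show n - 1 + 1 = n by omega]
      have e0 : C.getVert n = C.getVert 0 := by
        rw [SimpleGraph.Walk.getVert_zero, show n = C.length from hn.symm,
          SimpleGraph.Walk.getVert_length]
      rw [e0]
      exact C.adj_getVert_succ (by omega)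
  -- steps
  have hstep : ∀ k : ℕ, |I (cvtx C (k + 1)) - I (cvtx C k)| ≤ 1 := by
    intro k
    have hnek : (k + 1) % n ≠ k % n := by
      rcases hsucc k with ⟨h1, _⟩ | ⟨h1, h2⟩ <;> omega
    exact (hI _ _ (hne _ _ hnek)).mp (hadjk k).symm
  -- periodicity
  have hper : ∀ k : ℕ, cvtx C (k + n) = cvtx C k := by
    intro k
    show C.support.tail.getD ((k + n) % C.length) v = C.support.tail.getD (k % C.length) v
    rw [hn, Nat.add_mod_right]
  -- apply core
  obtain ⟨p, d, hodd, h3, h5, hb1, hb2⟩ :=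
    uig_core hlen heven (fun k => I (cvtx C k))
      (fun i => by rw [hper]) (fun i => hstep i)
  -- non-edge helper
  have hnotedge : ∀ a g : ℕ, 2 ≤ g → g + 2 ≤ n → s(cvtx C a, cvtx C (a + g)) ∉ C.edges := by
    intro a g hg2 hgn hmem
    obtain ⟨r, hrn, he⟩ := walk_edge_mem C _ hmem
    rw [hn] at hrn
    rw [hgv r (by omega), hgv (r + 1) (by omega)] at he
    rcases Sym2.eq_iff.mp he with ⟨h1, h2⟩ | ⟨h1, h2⟩
    · have e1 : a % n = (n - 1 + r) % n := (hcv _ _).mp h1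
      have e2 : (a + g) % n = (n - 1 + (r + 1)) % n := (hcv _ _).mp h2
      have m1 : (a + g) % n = (n - 1 + r + g) % n := by
        exact Nat.ModEq.add_right g e1
      have m2 : Nat.ModEq n (n - 1 + (r + 1)) (n - 1 + r + g) := by
        exact Nat.ModEq.trans (Nat.ModEq.symm e2) m1
      have hdvd := (Nat.modEq_iff_dvd' (by omega)).mp m2
      rw [show n - 1 + r + g - (n - 1 + (r + 1)) = g - 1 by omega] at hdvd
      have := Nat.le_of_dvd (by omega) hdvd
      omega
    · have e1 : a % n = (n - 1 + (r + 1)) % n := (hcv _ _).mp h1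
      have e2 : (a + g) % n = (n - 1 + r) % n := (hcv _ _).mp h2
      have m1 : (a + g) % n = (n - 1 + (r + 1) + g) % n := by
        exact Nat.ModEq.add_right g e1
      have m2 : Nat.ModEq n (n - 1 + r) (n - 1 + (r + 1) + g) := by
        exact Nat.ModEq.trans (Nat.ModEq.symm e2) m1
      have hdvd := (Nat.modEq_iff_dvd' (by omega)).mp m2
      rw [show n - 1 + (r + 1) + g - (n - 1 + r) = g + 1 by omega] at hdvd
      have := Nat.le_of_dvd (by omega) hdvd
      omega
  -- assemble
  have ne1 : cvtx C p ≠ cvtx C (p + d) := hne _ _ (hfar p d (by omega) (by omega))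
  have adj1 : G.Adj (cvtx C p) (cvtx C (p + d)) := (hI _ _ ne1).mpr hb1
  have chord1 : IsChordAt C p (p + d) := ⟨adj1, hnotedge p d (by omega) (by omega)⟩
  have egap : p + n - 1 = p + d + 1 + (n - d - 2) := by omega
  have ne2 : cvtx C (p + d + 1) ≠ cvtx C (p + n - 1) := by
    rw [egap]
    exact hne _ _ (hfar _ (n - d - 2) (by omega) (by omega))
  have adj2 : G.Adj (cvtx C (p + d + 1)) (cvtx C (p + n - 1)) := by
    refine (hI _ _ ne2).mpr ?_
    rw [abs_sub_comm]
    exact hb2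
  have nedge2 : s(cvtx C (p + d + 1), cvtx C (p + n - 1)) ∉ C.edges := by
    rw [egap]
    exact hnotedge (p + d + 1) (n - d - 2) (by omega) (by omega)
  have chord2 : IsChordAt C (p + d + 1) (p + n - 1) := ⟨adj2, nedge2⟩
  have odd2 : Odd (d + 2) := by
    obtain ⟨t, ht⟩ := hodd
    exact ⟨t + 1, by omega⟩
  refine ⟨p, d, by omega, by omega, chord1, Or.inl hodd, ?_, Or.inr odd2⟩
  rw [hn]
  exact chord2
end

section
/- Let C be a cycle of even length at least 6 in a complete r-partite graph G. If C has no odd chord, then every even chord of C exists in G (i.e., any two vertices of C at even distance along C are adjacent in G). -/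
set_option linter.unusedSectionVars false
open SimpleGraph


variable {V : Type*} [Fintype V] [DecidableEq V]

lemma support_getD {G : SimpleGraph V} {u w : V} (p : G.Walk u w) (k : ℕ) (hk : k ≤ p.length)
    (d : V) : p.support.getD k d = p.getVert k := by
  induction p generalizing k with
  | nil =>
    simp only [SimpleGraph.Walk.length_nil, Nat.le_zero] at hk
    subst hk
    simp [SimpleGraph.Walk.getVert]
  | cons h q ih =>
    cases k with
    | zero => simp [SimpleGraph.Walk.getVert]
    | succ k =>
      simp only [SimpleGraph.Walk.support_cons, List.getD_cons_succ,
        SimpleGraph.Walk.getVert_cons_succ]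
      exact ih k (by simpa [Nat.succ_le_succ_iff] using hk)

lemma edges_getElem {G : SimpleGraph V} {u w : V} (p : G.Walk u w) (k : ℕ) (hk : k < p.length) :
    p.edges[k]'(by simpa using hk) = s(p.getVert k, p.getVert (k+1)) := by
  induction p generalizing k with
  | nil => simp at hk
  | cons h q ih =>
    cases k with
    | zero => simp [SimpleGraph.Walk.getVert, SimpleGraph.Walk.getVert_zero]
    | succ k =>
      simp only [SimpleGraph.Walk.edges_cons, List.getElem_cons_succ,
        SimpleGraph.Walk.getVert_cons_succ]
      exact ih k (by simpa using hk)

set_option linter.unusedSectionVars false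

lemma cvtx_eq_getVert {G : SimpleGraph V} {v : V} (C : G.Walk v v) (hpos : 0 < C.length)
    (i : ℕ) : cvtx C i = C.getVert (i % C.length + 1) := by
  have hsup : C.support = v :: C.support.tail := C.support_eq_cons
  have : C.support.getD (i % C.length + 1) v = C.getVert (i % C.length + 1) :=
    support_getD C _ (by have := Nat.mod_lt i hpos; omega) v
  rw [cvtx, ← this]
  conv_rhs => rw [hsup]
  simp

lemma cvtx_mod {G : SimpleGraph V} {v : V} (C : G.Walk v v) (i : ℕ) :
    cvtx C (i % C.length) = cvtx C i := by
  simp [cvtx, Nat.mod_mod_of_dvd _ dvd_rfl]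

lemma cvtx_inj {G : SimpleGraph V} {v : V} {C : G.Walk v v} (hC : C.IsCycle)
    {a b : ℕ} (ha : a < C.length) (hb : b < C.length) (h : cvtx C a = cvtx C b) : a = b := by
  have hlen : C.support.tail.length = C.length := by
    have := C.length_support
    simp [List.length_tail, this]
  have ha' : a % C.length = a := Nat.mod_eq_of_lt ha
  have hb' : b % C.length = b := Nat.mod_eq_of_lt hb
  rw [cvtx, cvtx, ha', hb', List.getD_eq_getElem _ _ (by omega),
    List.getD_eq_getElem _ _ (by omega)] at h
  exact (hC.support_nodup.getElem_inj_iff).mp h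

lemma mem_edges_cvtx {G : SimpleGraph V} {v : V} {C : G.Walk v v} (hpos : 0 < C.length)
    {e : Sym2 V} (he : e ∈ C.edges) :
    ∃ k, k < C.length ∧ e = s(cvtx C k, cvtx C (k+1)) := by
  obtain ⟨m, hm, hme⟩ := List.mem_iff_getElem.mp he
  have hm' : m < C.length := by simpa using hm
  rw [edges_getElem C m hm'] at hme
  cases m with
  | zero =>
    refine ⟨C.length - 1, by omega, ?_⟩
    have h1 : cvtx C (C.length - 1) = C.getVert C.length := by
      rw [cvtx_eq_getVert C hpos, Nat.mod_eq_of_lt (by omega)]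
      congr 1; omega
    have h2 : cvtx C (C.length - 1 + 1) = C.getVert 1 := by
      rw [cvtx_eq_getVert C hpos]
      congr 1
      have : C.length - 1 + 1 = C.length := by omega
      rw [this, Nat.mod_self]
    rw [h1, h2, C.getVert_length, ← hme, C.getVert_zero]
  | succ m' =>
    refine ⟨m', by omega, ?_⟩
    rw [cvtx_eq_getVert C hpos, cvtx_eq_getVert C hpos,
      Nat.mod_eq_of_lt (by omega), Nat.mod_eq_of_lt (by omega), ← hme]

lemma cvtx_edge_mem {G : SimpleGraph V} {v : V} {C : G.Walk v v} (hpos : 0 < C.length)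
    {k : ℕ} (hk : k < C.length) : s(cvtx C k, cvtx C (k+1)) ∈ C.edges := by
  rcases Nat.lt_or_ge (k+1) C.length with h | h
  · have := edges_getElem C (k+1) h
    rw [cvtx_eq_getVert C hpos, cvtx_eq_getVert C hpos,
      Nat.mod_eq_of_lt hk, Nat.mod_eq_of_lt h, ← this]
    exact List.getElem_mem _
  · have hk' : k = C.length - 1 := by omega
    have := edges_getElem C 0 hpos
    have h1 : cvtx C k = C.getVert 0 := by
      rw [cvtx_eq_getVert C hpos, Nat.mod_eq_of_lt hk, hk', C.getVert_zero]
      have : C.length - 1 + 1 = C.length := by omega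
      rw [this, C.getVert_length]
    have h2 : cvtx C (k+1) = C.getVert 1 := by
      rw [cvtx_eq_getVert C hpos, hk']
      congr 1
      have : C.length - 1 + 1 = C.length := by omega
      rw [this, Nat.mod_self]
    rw [h1, h2, ← this]
    exact List.getElem_mem _

lemma adj_cvtx_succ {G : SimpleGraph V} {v : V} {C : G.Walk v v} (hpos : 0 < C.length)
    {k : ℕ} (hk : k < C.length) : G.Adj (cvtx C k) (cvtx C (k+1)) :=
  C.adj_of_mem_edges (cvtx_edge_mem hpos hk)

lemma not_edge_of_gap {G : SimpleGraph V} {v : V} {C : G.Walk v v} (hC : C.IsCycle)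
    {a b : ℕ} (hab : a < b) (hb : b < C.length) (h2 : 2 ≤ b - a) (h2' : b - a ≤ C.length - 2) :
    s(cvtx C a, cvtx C b) ∉ C.edges := by
  intro he
  have hpos : 0 < C.length := by omega
  obtain ⟨k, hk, hke⟩ := mem_edges_cvtx hpos he
  have hk1 : cvtx C (k+1) = cvtx C ((k+1) % C.length) := (cvtx_mod C (k+1)).symm
  rw [Sym2.eq_iff] at hke
  rcases hke with ⟨h1, h3⟩ | ⟨h1, h3⟩
  · have ha' : a = k := cvtx_inj hC (by omega) hk h1
    have hb' : b = (k+1) % C.length := by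
      refine cvtx_inj hC hb (Nat.mod_lt _ hpos) ?_
      rw [← hk1]; exact h3
    rcases Nat.lt_or_ge (k+1) C.length with h | h
    · rw [Nat.mod_eq_of_lt h] at hb'; omega
    · have : (k+1) % C.length = 0 := by
        have : k + 1 = C.length := by omega
        rw [this, Nat.mod_self]
      omega
  · have hb' : b = k := cvtx_inj hC hb hk h3
    have ha' : a = (k+1) % C.length := by
      refine cvtx_inj hC (by omega) (Nat.mod_lt _ hpos) ?_
      rw [← hk1]; exact h1
    rcases Nat.lt_or_ge (k+1) C.length with h | h
    · rw [Nat.mod_eq_of_lt h] at ha'; omega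
    · have : (k+1) % C.length = 0 := by
        have : k + 1 = C.length := by omega
        rw [this, Nat.mod_self]
      omega

/-- in a complete `r`-partite graph, an even cycle of length at
least 6 with no odd chord has all even chords: any two vertices of `C` at even
distance along `C` are adjacent in `G`. -/
theorem stmt_14 (G : SimpleGraph V) (r : ℕ) (part : V → Fin r)
    (hpart : ∀ u w : V, G.Adj u w ↔ part u ≠ part w)
    (v : V) (C : G.Walk v v) (hC : C.IsCycle)
    (heven : Even C.length) (hlen : 6 ≤ C.length)
    (hno : ¬ HasOddChord C) :
    ∀ i j : ℕ, i < j → j < C.length → Even (j - i) → G.Adj (cvtx C i) (cvtx C j) := by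
  intro i j hij hj hev
  have hpos : 0 < C.length := by omega
  by_contra hA
  obtain ⟨m, hm⟩ := hev
  obtain ⟨t, ht⟩ := heven
  have hi : i < C.length := lt_trans hij hj
  have same : part (cvtx C i) = part (cvtx C j) := by
    by_contra h; exact hA ((hpart _ _).mpr h)
  have peq : ∀ a b : ℕ, a < b → b < C.length → Odd (b - a) → 2 ≤ b - a →
      b - a ≤ C.length - 2 → part (cvtx C a) = part (cvtx C b) := by
    intro a b h1 h2 h3 h4 h5
    by_contra hne
    exact hno ⟨a, b, h1, h2, h3, (hpart _ _).mpr hne, not_edge_of_gap hC h1 h2 h4 h5⟩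
  have padj : ∀ k, k < C.length → part (cvtx C k) ≠ part (cvtx C (k+1)) :=
    fun k hk => (hpart _ _).mp (adj_cvtx_succ hpos hk)
  have hd2 : 2 ≤ j - i := by omega
  have hdle : j - i ≤ C.length - 2 := by omega
  rcases le_or_gt 4 (j - i) with h4 | h4
  · have h1 := peq i (j-1) (by omega) (by omega) ⟨m-1, by omega⟩ (by omega) (by omega)
    have h2 := padj (j-1) (by omega)
    have he : j - 1 + 1 = j := by omega
    rw [he] at h2
    exact h2 ((h1.symm.trans same))
  · have hd : j = i + 2 := by omega
    rcases Nat.lt_or_ge (j+1) C.length with hlt | hge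
    · have h1 := peq i (j+1) (by omega) hlt ⟨1, by omega⟩ (by omega) (by omega)
      exact padj j hj (same.symm.trans h1)
    · have hje : j = C.length - 1 := by omega
      have h1 := peq 0 i (by omega) hi ⟨t-2, by omega⟩ (by omega) (by omega)
      have h2 := padj (C.length - 1) (by omega)
      have he : C.length - 1 + 1 = C.length := by omega
      rw [he] at h2
      have h0 : cvtx C C.length = cvtx C 0 := by
        rw [← cvtx_mod C C.length, Nat.mod_self]
      rw [h0, ← hje] at h2
      exact h2 (same.symm.trans h1.symm)
end

section
/- For t = ⌈3 log(n)/p⌉, the Erdős–Rényi random graph G(n,p) contains no K_{t,t} in its complement with probability at least 1 - 1/n for all sufficiently large n; consequently, G(n,p) has the path-shortening property Pshort(t) with high probability. -/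
variable {V : Type*} [Fintype V] [DecidableEq V]

open MeasureTheory

/-- The Bernoulli measure on `Bool` with success probability `p`. -/
noncomputable def bern (p : ℝ) : Measure Bool :=
  ENNReal.ofReal p • Measure.dirac true + ENNReal.ofReal (1 - p) • Measure.dirac false

/-- The Erdős–Rényi measure `G(n,p)`: each potential edge appears independently
with probability `p`. A sample `ω : Sym2 (Fin n) → Bool` determines the graph
`SimpleGraph.fromEdgeSet {e | ω e = true}`. -/
noncomputable def erMeasure (n : ℕ) (p : ℝ) : Measure (Sym2 (Fin n) → Bool) :=
  Measure.pi fun _ => bern p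

/-- The complement of `G` contains no `K_{t,t}`. -/
def NoBipHole {W : Type*} [DecidableEq W] (G : SimpleGraph W) (t : ℕ) : Prop :=
  ¬ ∃ A B : Finset W, Disjoint A B ∧ A.card = t ∧ B.card = t ∧
    ∀ x ∈ A, ∀ y ∈ B, ¬ G.Adj x y


namespace Stmt19

open Finset MeasureTheory



/-! ### ℕ sum lemmas -/

lemma bstep (m : ℕ) :
    ∑ c ∈ range (m+3), min c (m+2-c) = (∑ c ∈ range (m+1), min c (m-c)) + (m+1) := by
  rw [Finset.sum_range_succ]
  have h2 : min (m+2) (m+2-(m+2)) = 0 := by omega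
  rw [h2, add_zero, Finset.sum_range_succ']
  have h0 : min 0 (m+2-0) = 0 := by omega
  rw [h0, add_zero]
  have hcong : ∀ c ∈ range (m+1), min (c+1) (m+2-(c+1)) = min c (m-c) + 1 := by
    intro c hc
    rw [Finset.mem_range] at hc
    omega
  rw [Finset.sum_congr rfl hcong, Finset.sum_add_distrib, Finset.sum_const, card_range,
    smul_eq_mul, mul_one]

lemma bsum : ∀ m : ℕ, m*m ≤ 4 * (∑ c ∈ range (m+1), min c (m-c)) + 1 := by
  intro m
  induction m using Nat.strong_induction_on with
  | _ m ih =>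
    match m with
    | 0 => simp
    | 1 => decide
    | (m+2) =>
      have hb := bstep m
      have hm := ih m (by omega)
      rw [show m+2+1 = m+3 from rfl, hb]
      nlinarith [hm]

lemma kbound {t : ℕ} (ht : 90 ≤ t) :
    17 * (t*t) ≤ 25 * ((∑ j ∈ range t, j) + ∑ c ∈ range (t-1), min c (t-2-c)) := by
  obtain ⟨u, rfl⟩ : ∃ u, t = u + 2 := ⟨t - 2, by omega⟩
  have hT2 : (∑ j ∈ range (u+2), j) * 2 = (u+2) * (u+1) := by
    rw [Finset.sum_range_id_mul_two]
    congr 1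
  have hB : u*u ≤ 4 * (∑ c ∈ range (u+1), min c (u-c)) + 1 := bsum u
  have hre : (∑ c ∈ range (u+2-1), min c (u+2-2-c)) = ∑ c ∈ range (u+1), min c (u-c) := by
    apply Finset.sum_congr (by norm_num)
    intro c _; congr 1
  rw [hre]
  have hu : 88 ≤ u := by omega
  nlinarith [hT2, hB, hu]


/-! ### List lemmas -/

lemma flatMap_sublist {α β : Type*} (f : α → List β) {l₁ l₂ : List α} (h : l₁.Sublist l₂) :
    (l₁.flatMap f).Sublist (l₂.flatMap f) := by
  induction h with
  | slnil => simp
  | cons a h ih => rw [List.flatMap_cons]; exact ih.trans (List.sublist_append_right _ _)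
  | cons_cons a h ih => rw [List.flatMap_cons, List.flatMap_cons]; exact ih.append_left _

lemma pair_sublist_finRange : ∀ {t : ℕ} (i j : Fin t), i < j → [i, j].Sublist (List.finRange t) := by
  intro t
  induction t with
  | zero => exact fun i => i.elim0
  | succ t ih =>
    intro i j hij
    rw [List.finRange_succ]
    by_cases hi : i = 0
    · subst hi
      have hj : j ≠ 0 := by
        intro h; subst h; exact absurd hij (lt_irrefl _)
      obtain ⟨j', rfl⟩ := Fin.eq_succ_of_ne_zero hj
      exact (List.singleton_sublist.mpr (List.mem_map_of_mem (List.mem_finRange j'))).cons₂ 0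
    · obtain ⟨i', rfl⟩ := Fin.eq_succ_of_ne_zero hi
      have hj : j ≠ 0 := by
        intro h; subst h
        exact absurd hij (by simp [Fin.lt_def])
      obtain ⟨j', rfl⟩ := Fin.eq_succ_of_ne_zero hj
      have h2 := (List.Sublist.map Fin.succ
        (ih i' j' (Fin.succ_lt_succ_iff.mp hij)))
      exact List.Sublist.cons 0 (by simpa using h2)

lemma quad_sub {n t : ℕ} (a b : Fin t → Fin n) (i j : Fin t) (h : i < j) :
    [a i, b i, a j, b j].Sublist ((List.finRange t).flatMap fun k => [a k, b k]) := by
  have := flatMap_sublist (fun k => [a k, b k]) (pair_sublist_finRange i j h)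
  simpa using this

lemma single_sub {n t : ℕ} (a b : Fin t → Fin n) (i : Fin t) :
    [a i, b i].Sublist ((List.finRange t).flatMap fun k => [a k, b k]) := by
  have := flatMap_sublist (fun k => [a k, b k])
    (List.singleton_sublist.mpr (List.mem_finRange i))
  simpa using this

lemma distinct_of_nodup {n t : ℕ} {a b : Fin t → Fin n}
    (hnd : ((List.finRange t).flatMap fun k => [a k, b k]).Nodup) :
    (∀ i j : Fin t, i ≠ j → a i ≠ a j) ∧ (∀ i j : Fin t, i ≠ j → b i ≠ b j) ∧
      ∀ i j : Fin t, a i ≠ b j := by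
  have key : ∀ i j : Fin t, i < j → a i ≠ a j ∧ b i ≠ b j ∧ a i ≠ b j ∧ b i ≠ a j := by
    intro i j h
    have h4 := List.Nodup.sublist (quad_sub a b i j h) hnd
    simp only [List.nodup_cons, List.mem_cons, List.mem_singleton, List.not_mem_nil,
      List.nodup_nil, not_or] at h4
    tauto
  have same : ∀ i : Fin t, a i ≠ b i := by
    intro i
    have h2 := List.Nodup.sublist (single_sub a b i) hnd
    simp only [List.nodup_cons, List.mem_singleton, List.not_mem_nil, List.nodup_nil,
      not_false_iff, and_true] at h2
    exact h2
  refine ⟨?_, ?_, ?_⟩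
  · intro i j hij
    rcases lt_or_gt_of_ne hij with h | h
    · exact (key i j h).1
    · exact (Ne.symm (key j i h).1)
  · intro i j hij
    rcases lt_or_gt_of_ne hij with h | h
    · exact (key i j h).2.1
    · exact (Ne.symm (key j i h).2.1)
  · intro i j
    rcases lt_trichotomy i j with h | h | h
    · exact (key i j h).2.2.1
    · subst h; exact same i
    · exact (Ne.symm (key j i h).2.2.2)


/-! ### Bernoulli / product measure lemmas -/

lemma bern_false {p : ℝ} : bern p {false} = ENNReal.ofReal (1-p) := by
  simp [bern, Measure.add_apply, Measure.smul_apply, smul_eq_mul,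
    Measure.dirac_apply' _ (measurableSet_singleton false)]

lemma bern_univ {p : ℝ} (h0 : 0 ≤ p) (h1 : p ≤ 1) : bern p Set.univ = 1 := by
  simp only [bern, Measure.add_apply, Measure.smul_apply, smul_eq_mul,
    Measure.dirac_apply' _ MeasurableSet.univ, Set.indicator_univ, Pi.one_apply, mul_one]
  rw [← ENNReal.ofReal_add h0 (by linarith)]
  norm_num

lemma bern_prob {p : ℝ} (h0 : 0 ≤ p) (h1 : p ≤ 1) : IsProbabilityMeasure (bern p) :=
  ⟨bern_univ h0 h1⟩

lemma cyl_measure {n : ℕ} {p : ℝ} (h0 : 0 ≤ p) (h1 : p ≤ 1) (F : Finset (Sym2 (Fin n))) :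
    erMeasure n p {ω | ∀ e ∈ F, ω e = false} = ENNReal.ofReal (1-p) ^ F.card := by
  haveI : IsProbabilityMeasure (bern p) := bern_prob h0 h1
  have hset : {ω : Sym2 (Fin n) → Bool | ∀ e ∈ F, ω e = false} =
      Set.pi Set.univ (fun e => if e ∈ F then ({false} : Set Bool) else Set.univ) := by
    ext ω
    simp only [Set.mem_setOf_eq, Set.mem_pi, Set.mem_univ, true_implies]
    constructor
    · intro h e
      by_cases he : e ∈ F
      · simp [he, h e he]
      · simp [he]
    · intro h e he
      have := h e
      simpa [he] using this
  rw [hset, erMeasure, Measure.pi_pi]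
  have hcong : ∀ e : Sym2 (Fin n),
      bern p (if e ∈ F then ({false} : Set Bool) else Set.univ)
        = if e ∈ F then ENNReal.ofReal (1-p) else 1 := by
    intro e
    split
    · exact bern_false
    · exact bern_univ h0 h1
  calc (∏ e : Sym2 (Fin n), bern p (if e ∈ F then ({false} : Set Bool) else Set.univ))
      = ∏ e : Sym2 (Fin n), (if e ∈ F then ENNReal.ofReal (1-p) else 1) :=
        Finset.prod_congr rfl (fun e _ => hcong e)
    _ = ∏ e ∈ Finset.univ ∩ F, ENNReal.ofReal (1-p) := Finset.prod_ite_mem _ _ _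
    _ = ENNReal.ofReal (1-p) ^ F.card := by rw [Finset.univ_inter, Finset.prod_const]

/-! ### graph edge helpers -/

lemma not_adj_false {n : ℕ} {ω : Sym2 (Fin n) → Bool} {x y : Fin n} (hxy : x ≠ y)
    (h : ¬ (SimpleGraph.fromEdgeSet {e | ω e = true}).Adj x y) : ω s(x, y) = false := by
  rw [SimpleGraph.fromEdgeSet_adj] at h
  cases hb : ω s(x, y) with
  | false => rfl
  | true => exact absurd ⟨hb, hxy⟩ h

lemma adj_of_true {n : ℕ} {ω : Sym2 (Fin n) → Bool} {x y : Fin n} (hxy : x ≠ y)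
    (h : ω s(x, y) = true) : (SimpleGraph.fromEdgeSet {e | ω e = true}).Adj x y := by
  rw [SimpleGraph.fromEdgeSet_adj]
  exact ⟨h, hxy⟩

/-! ### edge-pair families -/

def GoodN (n t : ℕ) (α β : ℕ → Fin n) : Prop :=
  (∀ i < t, ∀ j < t, α i = α j → i = j) ∧ (∀ i < t, ∀ j < t, β i = β j → i = j) ∧
    ∀ i < t, ∀ j < t, α i ≠ β j

def Ffwd {n : ℕ} (α β : ℕ → Fin n) (t : ℕ) : Finset (Sym2 (Fin n)) :=
  (range t).biUnion fun j => (range j).image fun i => s(α i, β j)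

def FA {n : ℕ} (α : ℕ → Fin n) (c : ℕ) : Finset (Sym2 (Fin n)) :=
  (range c).image fun i => s(α i, α (c+1))

def FB {n : ℕ} (β : ℕ → Fin n) (t c : ℕ) : Finset (Sym2 (Fin n)) :=
  (Finset.Ico (c+2) t).image fun i => s(β c, β i)

def F2 {n : ℕ} (α β : ℕ → Fin n) (t : ℕ) (σ : Finset ℕ) : Finset (Sym2 (Fin n)) :=
  Ffwd α β t ∪ (range (t-1)).biUnion fun c => if c ∈ σ then FA α c else FB β t c

def Fall {n : ℕ} (α β : ℕ → Fin n) (t : ℕ) : Finset (Sym2 (Fin n)) :=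
  (range t).biUnion fun j => (range t).image fun i => s(α i, β j)

section Cards

variable {n t : ℕ} {α β : ℕ → Fin n}

lemma card_Fall (hG : GoodN n t α β) : (Fall α β t).card = t * t := by
  obtain ⟨hα, hβ, hαβ⟩ := hG
  rw [Fall, Finset.card_biUnion]
  · have : ∀ j ∈ range t, ((range t).image fun i => s(α i, β j)).card = t := by
      intro j hj
      rw [Finset.mem_range] at hj
      rw [Finset.card_image_of_injOn, card_range]
      intro i hi i' hi' he
      rw [Finset.mem_coe, Finset.mem_range] at hi hi'
      rw [Sym2.eq_iff] at he
      rcases he with ⟨h1, _⟩ | ⟨h1, h2⟩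
      · exact hα i hi i' hi' h1
      · exact absurd h1 (hαβ i hi j hj)
    rw [Finset.sum_congr rfl this, Finset.sum_const, card_range, smul_eq_mul]
  · intro j hj j' hj' hjj'
    rw [Finset.mem_coe, Finset.mem_range] at hj hj'
    rw [Function.onFun, Finset.disjoint_left]
    rintro e he he'
    simp only [Finset.mem_image, Finset.mem_range] at he he'
    obtain ⟨i, hi, rfl⟩ := he
    obtain ⟨i', hi', heq⟩ := he'
    rw [Sym2.eq_iff] at heq
    rcases heq with ⟨_, h2⟩ | ⟨h1, _⟩
    · exact hjj' (hβ j hj j' hj' h2.symm)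
    · exact (hαβ i' hi' j hj) h1

lemma card_FA (hG : GoodN n t α β) {c : ℕ} (hc : c + 1 < t) : (FA α c).card = c := by
  obtain ⟨hα, hβ, hαβ⟩ := hG
  rw [FA, Finset.card_image_of_injOn, card_range]
  intro i hi i' hi' he
  rw [Finset.mem_coe, Finset.mem_range] at hi hi'
  rw [Sym2.eq_iff] at he
  rcases he with ⟨h1, _⟩ | ⟨h1, h2⟩
  · exact hα i (by omega) i' (by omega) h1
  · have := hα i (by omega) (c+1) hc h1
    omega

lemma card_FB (hG : GoodN n t α β) {c : ℕ} : (FB β t c).card = t - 2 - c := by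
  obtain ⟨hα, hβ, hαβ⟩ := hG
  rw [FB, Finset.card_image_of_injOn, Nat.card_Ico]
  · omega
  intro i hi i' hi' he
  rw [Finset.mem_coe, Finset.mem_Ico] at hi hi'
  rw [Sym2.eq_iff] at he
  rcases he with ⟨_, h2⟩ | ⟨h1, h2⟩
  · exact hβ i hi.2 i' hi'.2 h2
  · have := hβ c (by omega) i' hi'.2 h1
    omega

lemma card_Ffwd (hG : GoodN n t α β) : (Ffwd α β t).card = ∑ j ∈ range t, j := by
  obtain ⟨hα, hβ, hαβ⟩ := hG
  rw [Ffwd, Finset.card_biUnion]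
  · refine Finset.sum_congr rfl ?_
    intro j hj
    rw [Finset.mem_range] at hj
    rw [Finset.card_image_of_injOn, card_range]
    intro i hi i' hi' he
    rw [Finset.mem_coe, Finset.mem_range] at hi hi'
    rw [Sym2.eq_iff] at he
    rcases he with ⟨h1, _⟩ | ⟨h1, h2⟩
    · exact hα i (by omega) i' (by omega) h1
    · exact absurd h1 (hαβ i (by omega) j hj)
  · intro j hj j' hj' hjj'
    rw [Finset.mem_coe, Finset.mem_range] at hj hj'
    rw [Function.onFun, Finset.disjoint_left]
    rintro e he he'
    simp only [Finset.mem_image, Finset.mem_range] at he he'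
    obtain ⟨i, hi, rfl⟩ := he
    obtain ⟨i', hi', heq⟩ := he'
    rw [Sym2.eq_iff] at heq
    rcases heq with ⟨_, h2⟩ | ⟨h1, _⟩
    · exact hjj' (hβ j hj j' hj' h2.symm)
    · exact (hαβ i' (by omega) j hj) h1

lemma card_F2 (hG : GoodN n t α β) (σ : Finset ℕ) :
    (∑ j ∈ range t, j) + (∑ c ∈ range (t-1), min c (t-2-c)) ≤ (F2 α β t σ).card := by
  obtain ⟨hα, hβ, hαβ⟩ := hG
  have hGG : GoodN n t α β := ⟨hα, hβ, hαβ⟩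
  -- branch membership description
  have hmemFA : ∀ {c : ℕ}, c + 1 < t → ∀ e ∈ FA α c,
      ∃ i, i < c ∧ e = s(α i, α (c+1)) := by
    intro c hc e he
    rw [FA, Finset.mem_image] at he
    obtain ⟨i, hi, rfl⟩ := he
    exact ⟨i, Finset.mem_range.mp hi, rfl⟩
  have hmemFB : ∀ {c : ℕ}, ∀ e ∈ FB β t c,
      ∃ i, c + 2 ≤ i ∧ i < t ∧ e = s(β c, β i) := by
    intro c e he
    rw [FB, Finset.mem_image] at he
    obtain ⟨i, hi, rfl⟩ := he
    rw [Finset.mem_Ico] at hi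
    exact ⟨i, hi.1, hi.2, rfl⟩
  have hdisjBranch : ∀ c ∈ range (t-1), ∀ c' ∈ range (t-1), c ≠ c' →
      Disjoint (if c ∈ σ then FA α c else FB β t c)
        (if c' ∈ σ then FA α c' else FB β t c') := by
    intro c hc c' hc' hcc'
    rw [Finset.mem_range] at hc hc'
    rw [Finset.disjoint_left]
    intro e he he'
    have hct : c + 1 < t := by omega
    have hct' : c' + 1 < t := by omega
    by_cases h1 : c ∈ σ <;> by_cases h2 : c' ∈ σ <;>
      simp only [h1, h2, if_true, if_false] at he he'
    · obtain ⟨i, hi, rfl⟩ := hmemFA hct e he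
      obtain ⟨i', hi', heq⟩ := hmemFA hct' _ he'
      rw [Sym2.eq_iff] at heq
      rcases heq with ⟨ha1, ha2⟩ | ⟨ha1, ha2⟩
      · have e1 := hα i (by omega) i' (by omega) ha1
        have e2 := hα (c+1) hct (c'+1) hct' ha2
        omega
      · have e1 := hα i (by omega) (c'+1) hct' ha1
        have e2 := hα (c+1) hct i' (by omega) ha2
        omega
    · obtain ⟨i, hi, rfl⟩ := hmemFA hct e he
      obtain ⟨i', hi1', hi2', heq⟩ := hmemFB _ he'
      rw [Sym2.eq_iff] at heq
      rcases heq with ⟨ha1, ha2⟩ | ⟨ha1, ha2⟩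
      · exact hαβ i (by omega) c' (by omega) ha1
      · exact hαβ i (by omega) i' hi2' ha1
    · obtain ⟨i, hi1, hi2, rfl⟩ := hmemFB e he
      obtain ⟨i', hi', heq⟩ := hmemFA hct' _ he'
      rw [Sym2.eq_iff] at heq
      rcases heq with ⟨ha1, ha2⟩ | ⟨ha1, ha2⟩
      · exact (hαβ i' (by omega) c (by omega) ha1.symm)
      · exact (hαβ (c'+1) hct' c (by omega) ha1.symm)
    · obtain ⟨i, hi1, hi2, rfl⟩ := hmemFB e he
      obtain ⟨i', hi1', hi2', heq⟩ := hmemFB _ he'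
      rw [Sym2.eq_iff] at heq
      rcases heq with ⟨ha1, ha2⟩ | ⟨ha1, ha2⟩
      · have := hβ c (by omega) c' (by omega) ha1
        omega
      · have e1 := hβ c (by omega) i' hi2' ha1
        have e2 := hβ i hi2 c' (by omega) ha2
        omega
  have hdisjMain : Disjoint (Ffwd α β t)
      ((range (t-1)).biUnion fun c => if c ∈ σ then FA α c else FB β t c) := by
    rw [Finset.disjoint_right]
    intro e he he'
    rw [Finset.mem_biUnion] at he
    obtain ⟨c, hc, he⟩ := he
    rw [Finset.mem_range] at hc
    have hct : c + 1 < t := by omega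
    rw [Ffwd, Finset.mem_biUnion] at he'
    obtain ⟨j, hj, he'⟩ := he'
    rw [Finset.mem_range] at hj
    rw [Finset.mem_image] at he'
    obtain ⟨i, hi, heq⟩ := he'
    rw [Finset.mem_range] at hi
    by_cases h1 : c ∈ σ <;> simp only [h1, if_true, if_false] at he
    · obtain ⟨i', hi', rfl⟩ := hmemFA hct e he
      rw [Sym2.eq_iff] at heq
      rcases heq with ⟨ha1, ha2⟩ | ⟨ha1, ha2⟩
      · exact hαβ (c+1) hct j hj ha2.symm
      · exact hαβ i' (by omega) j hj ha2.symm
    · obtain ⟨i', hi1', hi2', rfl⟩ := hmemFB e he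
      rw [Sym2.eq_iff] at heq
      rcases heq with ⟨ha1, ha2⟩ | ⟨ha1, ha2⟩
      · exact hαβ i (by omega) c (by omega) ha1
      · exact hαβ i (by omega) i' hi2' ha1
  rw [F2, Finset.card_union_of_disjoint hdisjMain, Finset.card_biUnion hdisjBranch,
    card_Ffwd hGG]
  refine Nat.add_le_add_left (Finset.sum_le_sum ?_) _
  intro c hc
  rw [Finset.mem_range] at hc
  have hct : c + 1 < t := by omega
  by_cases h1 : c ∈ σ <;> simp only [h1, if_true, if_false]
  · rw [card_FA hGG hct]
    exact min_le_left _ _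
  · rw [card_FB hGG]
    exact min_le_right _ _

end Cards

/-! ### bounds for the two bad events -/

lemma bad1_bound {n : ℕ} {p : ℝ} (h0 : 0 ≤ p) (h1 : p ≤ 1) {t : ℕ} (ht : 0 < t) :
    erMeasure n p {ω | ¬ NoBipHole (SimpleGraph.fromEdgeSet {e | ω e = true}) t}
      ≤ ((n^t * n^t : ℕ) : ENNReal) * ENNReal.ofReal (1-p) ^ (t*t) := by
  classical
  set q := ENNReal.ofReal (1-p) with hq
  set lift : (Fin t → Fin n) → ℕ → Fin n := fun a m => a ⟨m % t, Nat.mod_lt m ht⟩ with hlift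
  have lift_eq : ∀ (a : Fin t → Fin n) (m : ℕ) (hm : m < t), lift a m = a ⟨m, hm⟩ := by
    intro a m hm
    simp only [hlift]
    congr 1
    exact Fin.ext (Nat.mod_eq_of_lt hm)
  set D := (Finset.univ : Finset ((Fin t → Fin n) × (Fin t → Fin n))).filter
      (fun ab => GoodN n t (lift ab.1) (lift ab.2)) with hD
  have hsub : {ω : Sym2 (Fin n) → Bool |
        ¬ NoBipHole (SimpleGraph.fromEdgeSet {e | ω e = true}) t}
      ⊆ ⋃ ab ∈ D, {ω : Sym2 (Fin n) → Bool |
          ∀ e ∈ Fall (lift ab.1) (lift ab.2) t, ω e = false} := by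
    intro ω hω
    rw [Set.mem_setOf_eq, NoBipHole, not_not] at hω
    obtain ⟨A, B, hdisj, hcA, hcB, hnadj⟩ := hω
    set ea := A.orderIsoOfFin hcA with hea
    set eb := B.orderIsoOfFin hcB with heb
    set a : Fin t → Fin n := fun i => (ea i : Fin n) with ha
    set b : Fin t → Fin n := fun i => (eb i : Fin n) with hb
    have hamem : ∀ i, a i ∈ A := fun i => (ea i).2
    have hbmem : ∀ i, b i ∈ B := fun i => (eb i).2
    have hcross : ∀ i j : Fin t, a i ≠ b j := by
      intro i j h
      exact (Finset.disjoint_left.mp hdisj (hamem i)) (h ▸ hbmem j)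
    have hGood : GoodN n t (lift a) (lift b) := by
      refine ⟨?_, ?_, ?_⟩ <;> intro i hi j hj
      · rw [lift_eq a i hi, lift_eq a j hj]
        intro h
        have h2 : (⟨i, hi⟩ : Fin t) = ⟨j, hj⟩ := ea.injective (Subtype.ext h)
        exact Fin.mk.inj h2
      · rw [lift_eq b i hi, lift_eq b j hj]
        intro h
        have h2 : (⟨i, hi⟩ : Fin t) = ⟨j, hj⟩ := eb.injective (Subtype.ext h)
        exact Fin.mk.inj h2
      · rw [lift_eq a i hi, lift_eq b j hj]
        exact hcross _ _
    refine Set.mem_iUnion₂.mpr ⟨(a, b), Finset.mem_filter.mpr ⟨Finset.mem_univ _, hGood⟩, ?_⟩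
    rw [Set.mem_setOf_eq]
    intro e he
    rw [Fall, Finset.mem_biUnion] at he
    obtain ⟨j, hj, he⟩ := he
    rw [Finset.mem_range] at hj
    rw [Finset.mem_image] at he
    obtain ⟨i, hi, rfl⟩ := he
    rw [Finset.mem_range] at hi
    rw [lift_eq a i hi, lift_eq b j hj]
    exact not_adj_false (hcross _ _) (hnadj _ (hamem ⟨i, hi⟩) _ (hbmem ⟨j, hj⟩))
  calc erMeasure n p {ω | ¬ NoBipHole (SimpleGraph.fromEdgeSet {e | ω e = true}) t}
      ≤ erMeasure n p (⋃ ab ∈ D, {ω : Sym2 (Fin n) → Bool |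
          ∀ e ∈ Fall (lift ab.1) (lift ab.2) t, ω e = false}) := measure_mono hsub
    _ ≤ ∑ ab ∈ D, erMeasure n p {ω : Sym2 (Fin n) → Bool |
          ∀ e ∈ Fall (lift ab.1) (lift ab.2) t, ω e = false} :=
        measure_biUnion_finset_le D _
    _ = ∑ ab ∈ D, q ^ (t*t) := by
        refine Finset.sum_congr rfl ?_
        intro ab hab
        rw [cyl_measure h0 h1, card_Fall (Finset.mem_filter.mp hab).2]
    _ = D.card • q ^ (t*t) := Finset.sum_const _
    _ ≤ ((n^t * n^t : ℕ) : ENNReal) * q ^ (t*t) := by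
        rw [nsmul_eq_mul]
        refine mul_le_mul_left ?_ _
        have hcard : D.card ≤ n^t * n^t := by
          calc D.card ≤ (Finset.univ : Finset ((Fin t → Fin n) × (Fin t → Fin n))).card :=
                Finset.card_filter_le _ _
            _ = n^t * n^t := by
                simp [Finset.card_univ, Fintype.card_fun]
        exact_mod_cast Nat.cast_le.mpr hcard

lemma bad2_bound {n : ℕ} {p : ℝ} (h0 : 0 ≤ p) (h1 : p ≤ 1) {t : ℕ} (ht : 0 < t) :
    erMeasure n p {ω | ¬ Pshort (SimpleGraph.fromEdgeSet {e | ω e = true}) t}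
      ≤ ((n^t * n^t : ℕ) : ENNReal) * 2^(t-1) * ENNReal.ofReal (1-p) ^
          ((∑ j ∈ range t, j) + ∑ c ∈ range (t-1), min c (t-2-c)) := by
  classical
  set q := ENNReal.ofReal (1-p) with hq
  set K := (∑ j ∈ range t, j) + ∑ c ∈ range (t-1), min c (t-2-c) with hK
  set lift : (Fin t → Fin n) → ℕ → Fin n := fun a m => a ⟨m % t, Nat.mod_lt m ht⟩ with hlift
  have lift_eq : ∀ (a : Fin t → Fin n) (m : ℕ) (hm : m < t), lift a m = a ⟨m, hm⟩ := by
    intro a m hm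
    simp only [hlift]
    congr 1
    exact Fin.ext (Nat.mod_eq_of_lt hm)
  set D := (Finset.univ : Finset ((Fin t → Fin n) × (Fin t → Fin n))).filter
      (fun ab => GoodN n t (lift ab.1) (lift ab.2)) with hD
  have hsub : {ω : Sym2 (Fin n) → Bool |
        ¬ Pshort (SimpleGraph.fromEdgeSet {e | ω e = true}) t}
      ⊆ ⋃ ab ∈ D, ⋃ σ ∈ (range (t-1)).powerset, {ω : Sym2 (Fin n) → Bool |
          ∀ e ∈ F2 (lift ab.1) (lift ab.2) t σ, ω e = false} := by
    intro ω hω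
    rw [Set.mem_setOf_eq, Pshort] at hω
    push_neg at hω
    obtain ⟨M, hM, u, v, P, hPath, hAlt, a, b, hmemP, hsubL, hnot1, hnot2⟩ := hω
    have hnd : ((List.finRange t).flatMap fun k => [a k, b k]).Nodup :=
      List.Nodup.sublist hsubL hPath.support_nodup
    obtain ⟨hA, hB, hAB⟩ := distinct_of_nodup hnd
    have hGood : GoodN n t (lift a) (lift b) := by
      refine ⟨?_, ?_, ?_⟩ <;> intro i hi j hj
      · rw [lift_eq a i hi, lift_eq a j hj]
        intro h
        by_contra hij
        exact hA ⟨i, hi⟩ ⟨j, hj⟩ (fun hh => hij (Fin.mk.inj hh)) h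
      · rw [lift_eq b i hi, lift_eq b j hj]
        intro h
        by_contra hij
        exact hB ⟨i, hi⟩ ⟨j, hj⟩ (fun hh => hij (Fin.mk.inj hh)) h
      · rw [lift_eq a i hi, lift_eq b j hj]
        exact hAB _ _
    set σ := (range (t-1)).filter
      (fun c => ∀ i ∈ range c, ω s(lift a i, lift a (c+1)) = false) with hσ
    refine Set.mem_iUnion₂.mpr ⟨(a, b), Finset.mem_filter.mpr ⟨Finset.mem_univ _, hGood⟩,
      Set.mem_iUnion₂.mpr ⟨σ, Finset.mem_powerset.mpr (Finset.filter_subset _ _), ?_⟩⟩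
    rw [Set.mem_setOf_eq]
    intro e he
    rw [F2, Finset.mem_union] at he
    rcases he with he | he
    · -- forward pairs
      rw [Ffwd, Finset.mem_biUnion] at he
      obtain ⟨j, hj, he⟩ := he
      rw [Finset.mem_range] at hj
      rw [Finset.mem_image] at he
      obtain ⟨i, hi, rfl⟩ := he
      rw [Finset.mem_range] at hi
      have hit : i < t := lt_trans hi hj
      rw [lift_eq a i hit, lift_eq b j hj]
      exact not_adj_false (hAB _ _) (hnot1 ⟨i, hit⟩ ⟨j, hj⟩ (Fin.mk_lt_mk.mpr hi))
    · rw [Finset.mem_biUnion] at he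
      obtain ⟨c, hc, he⟩ := he
      rw [Finset.mem_range] at hc
      have hct : c + 1 < t := by omega
      by_cases hcσ : c ∈ σ
      · rw [if_pos hcσ] at he
        rw [FA, Finset.mem_image] at he
        obtain ⟨i, hi, rfl⟩ := he
        exact (Finset.mem_filter.mp hcσ).2 i hi
      · rw [if_neg hcσ] at he
        rw [FB, Finset.mem_image] at he
        obtain ⟨i4, hi4, rfl⟩ := he
        rw [Finset.mem_Ico] at hi4
        have hnall : ¬ ∀ i ∈ range c, ω s(lift a i, lift a (c+1)) = false := by
          intro hall
          exact hcσ (Finset.mem_filter.mpr ⟨Finset.mem_range.mpr hc, hall⟩)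
        push_neg at hnall
        obtain ⟨i1, hi1, htrue⟩ := hnall
        rw [Finset.mem_range] at hi1
        have hi1t : i1 < t := by omega
        have hi4t : i4 < t := hi4.2
        have hcc : c < t := by omega
        have htrue' : ω s(lift a i1, lift a (c+1)) = true := by
          cases hval : ω s(lift a i1, lift a (c+1)) with
          | false => exact absurd hval htrue
          | true => rfl
        have adj1 : (SimpleGraph.fromEdgeSet {e | ω e = true}).Adj (a ⟨i1, hi1t⟩) (a ⟨c+1, hct⟩) := by
          refine adj_of_true ?_ ?_
          · have : (⟨i1, hi1t⟩ : Fin t) ≠ ⟨c+1, hct⟩ := fun hh => by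
              have := Fin.mk.inj hh; omega
            exact hA _ _ this
          · rw [← lift_eq a i1 hi1t, ← lift_eq a (c+1) hct]
            exact htrue'
        by_contra hfalse
        have htrue2 : ω s(lift b c, lift b i4) = true := by
          cases hval : ω s(lift b c, lift b i4) with
          | false => exact absurd hval hfalse
          | true => rfl
        have adj2 : (SimpleGraph.fromEdgeSet {e | ω e = true}).Adj (b ⟨c, hcc⟩) (b ⟨i4, hi4t⟩) := by
          refine adj_of_true ?_ ?_
          · have : (⟨c, hcc⟩ : Fin t) ≠ ⟨i4, hi4t⟩ := fun hh => by
              have := Fin.mk.inj hh; omega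
            exact hB _ _ this
          · rw [← lift_eq b c hcc, ← lift_eq b i4 hi4t]
            exact htrue2
        exact hnot2 ⟨i1, hi1t⟩ ⟨c, hcc⟩ ⟨c+1, hct⟩ ⟨i4, hi4t⟩
          (Fin.mk_lt_mk.mpr hi1) (Fin.mk_lt_mk.mpr (by omega)) (Fin.mk_lt_mk.mpr (by omega))
          adj1 adj2
  have hq1 : q ≤ 1 := ENNReal.ofReal_le_one.mpr (by linarith)
  calc erMeasure n p {ω | ¬ Pshort (SimpleGraph.fromEdgeSet {e | ω e = true}) t}
      ≤ erMeasure n p (⋃ ab ∈ D, ⋃ σ ∈ (range (t-1)).powerset, {ω : Sym2 (Fin n) → Bool |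
          ∀ e ∈ F2 (lift ab.1) (lift ab.2) t σ, ω e = false}) := measure_mono hsub
    _ ≤ ∑ ab ∈ D, erMeasure n p (⋃ σ ∈ (range (t-1)).powerset, {ω : Sym2 (Fin n) → Bool |
          ∀ e ∈ F2 (lift ab.1) (lift ab.2) t σ, ω e = false}) :=
        measure_biUnion_finset_le D _
    _ ≤ ∑ ab ∈ D, ∑ σ ∈ (range (t-1)).powerset, erMeasure n p {ω : Sym2 (Fin n) → Bool |
          ∀ e ∈ F2 (lift ab.1) (lift ab.2) t σ, ω e = false} :=
        Finset.sum_le_sum (fun ab _ => measure_biUnion_finset_le _ _)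
    _ ≤ ∑ ab ∈ D, ∑ σ ∈ (range (t-1)).powerset, q ^ K := by
        refine Finset.sum_le_sum (fun ab hab => Finset.sum_le_sum (fun σ hσ => ?_))
        rw [cyl_measure h0 h1]
        exact pow_le_pow_of_le_one zero_le hq1
          (card_F2 (Finset.mem_filter.mp hab).2 σ)
    _ = D.card • ((range (t-1)).powerset.card • q ^ K) := by
        rw [Finset.sum_const, Finset.sum_const]
    _ ≤ ((n^t * n^t : ℕ) : ENNReal) * 2^(t-1) * q ^ K := by
        rw [nsmul_eq_mul, nsmul_eq_mul, Finset.card_powerset, card_range, ← mul_assoc]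
        refine mul_le_mul_left (mul_le_mul' ?_ ?_) _
        · have hcard : D.card ≤ n^t * n^t := by
            calc D.card ≤ (Finset.univ : Finset ((Fin t → Fin n) × (Fin t → Fin n))).card :=
                  Finset.card_filter_le _ _
              _ = n^t * n^t := by
                  simp [Finset.card_univ, Fintype.card_fun]
          exact_mod_cast Nat.cast_le.mpr hcard
        · norm_cast

/-! ### real-number estimates -/

lemma exp_pow_le {p : ℝ} (h0 : 0 < p) (h1 : p < 1) (m : ℕ) :
    (1-p)^m ≤ Real.exp (-(p*m)) := by
  have h1p : (0:ℝ) ≤ 1 - p := by linarith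
  have he : (1-p) ≤ Real.exp (-p) := by nlinarith [Real.add_one_le_exp (-p)]
  calc (1-p)^m ≤ (Real.exp (-p))^m := pow_le_pow_left₀ h1p he m
    _ = Real.exp ((m:ℝ) * (-p)) := (Real.exp_nat_mul _ m).symm
    _ = Real.exp (-(p*m)) := by ring_nf

lemma npow_eq_exp {n : ℕ} (hn0 : (0:ℝ) < n) (t : ℕ) :
    (n:ℝ)^t = Real.exp ((t:ℝ) * Real.log n) := by
  have h := Real.exp_nat_mul (Real.log n) t
  rw [Real.exp_log hn0] at h
  exact h.symm

lemma inv2n_eq {n : ℕ} (hn0 : (0:ℝ) < n) :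
    1/(2*(n:ℝ)) = Real.exp (-(Real.log 2 + Real.log n)) := by
  rw [Real.exp_neg, Real.exp_add, Real.exp_log (by norm_num), Real.exp_log hn0, one_div]

lemma term1_real {n t : ℕ} {p : ℝ} (h0 : 0 < p) (h1 : p < 1)
    (hln : 100 ≤ Real.log n) (hpt : 3 * Real.log n ≤ p * t) (htR : (300:ℝ) ≤ t)
    (hn0 : (0:ℝ) < n) :
    ((n:ℝ)^t * (n:ℝ)^t) * (1-p)^(t*t) ≤ 1/(2*(n:ℝ)) := by
  set L := Real.log n with hLdef
  have hlog2a : Real.log 2 ≤ 1 := by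
    nlinarith [Real.log_le_sub_one_of_pos (show (0:ℝ) < 2 by norm_num)]
  have hlog2b : (0:ℝ) ≤ Real.log 2 := Real.log_nonneg (by norm_num)
  calc ((n:ℝ)^t * (n:ℝ)^t) * (1-p)^(t*t)
      ≤ (Real.exp ((t:ℝ)*L) * Real.exp ((t:ℝ)*L)) * Real.exp (-(p*(t*t : ℕ))) := by
        rw [npow_eq_exp hn0]
        gcongr
        exact exp_pow_le h0 h1 (t*t)
    _ = Real.exp ((t:ℝ)*L + (t:ℝ)*L + -(p*(t*t : ℕ))) := by
        rw [← Real.exp_add, ← Real.exp_add]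
    _ ≤ Real.exp (-(Real.log 2 + L)) := by
        apply Real.exp_le_exp.mpr
        have hcast : ((t*t : ℕ) : ℝ) = (t:ℝ) * t := by push_cast; ring
        rw [hcast]
        have hp2 : 3 * L * t ≤ p * t * t :=
          mul_le_mul_of_nonneg_right hpt (by linarith)
        nlinarith [hp2]
    _ = 1/(2*(n:ℝ)) := (inv2n_eq hn0).symm

lemma term2_real {n t K : ℕ} {p : ℝ} (h0 : 0 < p) (h1 : p < 1)
    (hln : 100 ≤ Real.log n) (hpt : 3 * Real.log n ≤ p * t) (htR : (300:ℝ) ≤ t)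
    (hn0 : (0:ℝ) < n) (hKt : 17 * ((t:ℝ)*t) ≤ 25 * K) :
    ((n:ℝ)^t * (n:ℝ)^t) * 2^(t-1) * (1-p)^K ≤ 1/(2*(n:ℝ)) := by
  set L := Real.log n with hLdef
  set c := Real.log 2 with hcdef
  have hlog2a : c ≤ 1 := by
    nlinarith [Real.log_le_sub_one_of_pos (show (0:ℝ) < 2 by norm_num)]
  have hlog2b : (0:ℝ) ≤ c := Real.log_nonneg (by norm_num)
  have ht0 : (0:ℝ) < t := by linarith
  have hK0 : (0:ℝ) ≤ K := Nat.cast_nonneg K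
  have htL : 3 * L ≤ t := by nlinarith [hpt, h0.le, h1.le]
  have h2pow : (2:ℝ)^(t-1) ≤ Real.exp ((t:ℝ) * c) := by
    have ha : (2:ℝ)^(t-1) ≤ 2^t := pow_le_pow_right₀ (by norm_num) (Nat.sub_le t 1)
    have hb := Real.exp_nat_mul c t
    rw [hcdef, Real.exp_log (by norm_num : (0:ℝ) < 2)] at hb
    rw [hcdef] at *
    calc (2:ℝ)^(t-1) ≤ 2^t := ha
      _ = Real.exp ((t:ℝ) * Real.log 2) := hb.symm
  have hKey : 2*((t:ℝ)*L) + (t:ℝ)*c + (c + L) ≤ p*K := by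
    have h5 : 3*L*(K:ℝ) ≤ (p*t)*K := mul_le_mul_of_nonneg_right hpt hK0
    refine le_of_mul_le_mul_right ?_ ht0
    -- (2tL + tc + (c+L)) * t ≤ (p*K)*t
    have e2 : 51 * ((t:ℝ)*t) * L ≤ 75 * L * K := by nlinarith [hKt, hln]
    have g1 : 25*((t:ℝ)*t)*c ≤ 25*((t:ℝ)*t) := by nlinarith [hlog2a, ht0]
    have g2 : 25*(t:ℝ)*c ≤ 25*(t:ℝ) := by nlinarith [hlog2a, ht0]
    have g3 : 25*((t:ℝ)*t) + 25*(t:ℝ) + 25*((t:ℝ)*L) ≤ ((t:ℝ)*t)*L := by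
      nlinarith [mul_le_mul_of_nonneg_left htL ht0.le, hln, htR,
        mul_le_mul_of_nonneg_left hln (mul_nonneg ht0.le ht0.le)]
    nlinarith [h5, e2, g1, g2, g3]
  calc ((n:ℝ)^t * (n:ℝ)^t) * 2^(t-1) * (1-p)^K
      ≤ (Real.exp ((t:ℝ)*L) * Real.exp ((t:ℝ)*L)) * Real.exp ((t:ℝ)*c) *
          Real.exp (-(p*K)) := by
        rw [npow_eq_exp hn0]
        gcongr
        exact exp_pow_le h0 h1 K
    _ = Real.exp (((t:ℝ)*L + (t:ℝ)*L + (t:ℝ)*c) + -(p*K)) := by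
        rw [← Real.exp_add, ← Real.exp_add, ← Real.exp_add]
    _ ≤ Real.exp (-(c + L)) := by
        apply Real.exp_le_exp.mpr
        linarith [hKey]
    _ = 1/(2*(n:ℝ)) := (inv2n_eq hn0).symm

/-! ### main lemma for a fixed `n` -/

lemma main_n {n : ℕ} {p : ℝ} (h0 : 0 < p) (h1 : p < 1) (hln : 100 ≤ Real.log n) :
    ENNReal.ofReal (1 - 1/(n:ℝ)) ≤ erMeasure n p
      {ω : Sym2 (Fin n) → Bool |
        NoBipHole (SimpleGraph.fromEdgeSet {e | ω e = true}) ⌈3 * Real.log n / p⌉₊ ∧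
        Pshort (SimpleGraph.fromEdgeSet {e | ω e = true}) ⌈3 * Real.log n / p⌉₊} := by
  classical
  set t := ⌈3 * Real.log n / p⌉₊ with htdef
  have hL0 : (0:ℝ) < Real.log n := by linarith
  have hn0 : (0:ℝ) < n := by
    by_contra h
    push_neg at h
    have hzero : (n:ℝ) = 0 := le_antisymm h (Nat.cast_nonneg n)
    rw [hzero, Real.log_zero] at hln
    linarith
  have hceil : 3 * Real.log n / p ≤ (t:ℝ) := Nat.le_ceil _
  have hpt : 3 * Real.log n ≤ p * t := by
    rw [div_le_iff₀ h0] at hceil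
    linarith
  have htR : (300:ℝ) ≤ t := by
    have h2 : 3 * Real.log n ≤ 3 * Real.log n / p := by
      rw [le_div_iff₀ h0]
      nlinarith
    linarith
  have ht0 : 0 < t := by
    have : (0:ℝ) < t := by linarith
    exact_mod_cast this
  have ht90 : 90 ≤ t := by
    have : (90:ℝ) ≤ t := by linarith
    exact_mod_cast this
  set K := (∑ j ∈ range t, j) + ∑ c ∈ range (t-1), min c (t-2-c) with hKdef
  have hKt : 17 * ((t:ℝ)*t) ≤ 25 * (K:ℝ) := by
    have := kbound ht90
    rw [← hKdef] at this
    exact_mod_cast this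
  haveI : IsProbabilityMeasure (bern p) := bern_prob h0.le h1.le
  haveI : IsProbabilityMeasure (erMeasure n p) := by
    constructor
    rw [erMeasure, Measure.pi_univ]
    have hb : bern p Set.univ = 1 := bern_univ h0.le h1.le
    simp only [hb, Finset.prod_const_one]
  set T : Set (Sym2 (Fin n) → Bool) := {ω |
      NoBipHole (SimpleGraph.fromEdgeSet {e | ω e = true}) t ∧
      Pshort (SimpleGraph.fromEdgeSet {e | ω e = true}) t} with hT
  have hTm : MeasurableSet T := (Set.toFinite T).measurableSet
  have h1p : (0:ℝ) ≤ 1 - p := by linarith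
  -- bound on the first bad set
  have hbd1 : ((n^t * n^t : ℕ) : ENNReal) * ENNReal.ofReal (1-p) ^ (t*t)
      ≤ ENNReal.ofReal (1/(2*(n:ℝ))) := by
    have heq : ((n^t * n^t : ℕ) : ENNReal) * ENNReal.ofReal (1-p) ^ (t*t)
        = ENNReal.ofReal (((n:ℝ)^t * (n:ℝ)^t) * (1-p)^(t*t)) := by
      rw [ENNReal.ofReal_mul (by positivity), ENNReal.ofReal_pow h1p]
      congr 1
      rw [← ENNReal.ofReal_natCast (n^t * n^t)]
      congr 1
      push_cast
      ring
    rw [heq]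
    exact ENNReal.ofReal_le_ofReal (term1_real h0 h1 hln hpt htR hn0)
  -- bound on the second bad set
  have hbd2 : ((n^t * n^t : ℕ) : ENNReal) * 2^(t-1) * ENNReal.ofReal (1-p) ^ K
      ≤ ENNReal.ofReal (1/(2*(n:ℝ))) := by
    have heq : ((n^t * n^t : ℕ) : ENNReal) * 2^(t-1) * ENNReal.ofReal (1-p) ^ K
        = ENNReal.ofReal (((n:ℝ)^t * (n:ℝ)^t) * 2^(t-1) * (1-p)^K) := by
      rw [ENNReal.ofReal_mul (by positivity), ENNReal.ofReal_mul (by positivity),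
        ENNReal.ofReal_pow h1p, ENNReal.ofReal_pow (by norm_num : (0:ℝ) ≤ 2)]
      congr 2
      · rw [← ENNReal.ofReal_natCast (n^t * n^t)]
        congr 1
        push_cast
        ring
      · norm_num
    rw [heq]
    exact ENNReal.ofReal_le_ofReal (term2_real h0 h1 hln hpt htR hn0 hKt)
  have hbad : erMeasure n p Tᶜ ≤ ENNReal.ofReal (1/(n:ℝ)) := by
    have hcompl : Tᶜ ⊆
        {ω : Sym2 (Fin n) → Bool | ¬ NoBipHole (SimpleGraph.fromEdgeSet {e | ω e = true}) t}
        ∪ {ω : Sym2 (Fin n) → Bool | ¬ Pshort (SimpleGraph.fromEdgeSet {e | ω e = true}) t} := by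
      intro ω hω
      rw [hT, Set.mem_compl_iff, Set.mem_setOf_eq, not_and_or] at hω
      exact hω
    calc erMeasure n p Tᶜ
        ≤ erMeasure n p
          ({ω : Sym2 (Fin n) → Bool | ¬ NoBipHole (SimpleGraph.fromEdgeSet {e | ω e = true}) t}
          ∪ {ω : Sym2 (Fin n) → Bool | ¬ Pshort (SimpleGraph.fromEdgeSet {e | ω e = true}) t}) :=
          measure_mono hcompl
      _ ≤ erMeasure n p
            {ω : Sym2 (Fin n) → Bool | ¬ NoBipHole (SimpleGraph.fromEdgeSet {e | ω e = true}) t}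
          + erMeasure n p
            {ω : Sym2 (Fin n) → Bool | ¬ Pshort (SimpleGraph.fromEdgeSet {e | ω e = true}) t} :=
          measure_union_le _ _
      _ ≤ ((n^t * n^t : ℕ) : ENNReal) * ENNReal.ofReal (1-p) ^ (t*t)
          + ((n^t * n^t : ℕ) : ENNReal) * 2^(t-1) * ENNReal.ofReal (1-p) ^ K :=
          add_le_add (bad1_bound h0.le h1.le ht0) (bad2_bound h0.le h1.le ht0)
      _ ≤ ENNReal.ofReal (1/(2*(n:ℝ))) + ENNReal.ofReal (1/(2*(n:ℝ))) := add_le_add hbd1 hbd2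
      _ = ENNReal.ofReal (1/(n:ℝ)) := by
          rw [← ENNReal.ofReal_add (by positivity) (by positivity)]
          congr 1
          rw [← add_div]
          rw [show (1:ℝ) + 1 = 2 by norm_num]
          rw [div_eq_div_iff (by positivity) (by positivity)]
          ring
  have hsum := measure_add_measure_compl (μ := erMeasure n p) hTm
  rw [measure_univ] at hsum
  have h1n : ENNReal.ofReal (1 - 1/(n:ℝ)) = 1 - ENNReal.ofReal (1/(n:ℝ)) := by
    rw [ENNReal.ofReal_sub _ (by positivity), ENNReal.ofReal_one]
  rw [h1n]
  refine tsub_le_iff_right.mpr ?_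
  calc (1:ENNReal) = erMeasure n p T + erMeasure n p Tᶜ := hsum.symm
    _ ≤ erMeasure n p T + ENNReal.ofReal (1/(n:ℝ)) := add_le_add le_rfl hbad

end Stmt19

/-- with `t = ⌈3 log n / p⌉`, for all sufficiently large `n` the
random graph `G(n,p)` contains no `K_{t,t}` in its complement — and hence has the
path-shortening property `Pshort(t)` — with probability at least `1 - 1/n`. -/
theorem stmt_19 (p : ℕ → ℝ) (hp : ∀ n, 0 < p n ∧ p n < 1) :
    ∀ᶠ n : ℕ in Filter.atTop,
      ENNReal.ofReal (1 - 1 / (n : ℝ)) ≤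
        erMeasure n (p n)
          {ω : Sym2 (Fin n) → Bool |
            NoBipHole (SimpleGraph.fromEdgeSet {e | ω e = true}) ⌈3 * Real.log n / p n⌉₊ ∧
            Pshort (SimpleGraph.fromEdgeSet {e | ω e = true}) ⌈3 * Real.log n / p n⌉₊} := by
  have hev : ∀ᶠ n : ℕ in Filter.atTop, 100 ≤ Real.log n :=
    (Real.tendsto_log_atTop.comp tendsto_natCast_atTop_atTop).eventually_ge_atTop 100
  filter_upwards [hev] with n hn
  exact Stmt19.main_n (hp n).1 (hp n).2 hn
end
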